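/- arXiv:2211.09975 — 7 statements merged into one kernel-verified Lean document; each statement's English description precedes it below -/
import Mathlib

section
/- Let x > 1 and let A₁, A₂, A₃, b₁, b₂ be positive reals and u, v, λ real numbers with 0 < u < v < 1 < λ. Assume that for all M ∈ [x^u, x^v] the estimate |S(M)| ≤ A₁·M^{b₁} + A₂·M^{-b₂} + A₃ holds. Then |S(x^u, x^v)| ≤ A₁′·x^{b₁·v} + A₂′·x^{-b₂·u} + A₃′·log x + A₃, where A₁′ = A₁/(1 − λ^{-b₁}), A₂′ = A₂/(1 − λ^{-b₂}), and A₃′ = A₃·(v − u)/log λ. -/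
/-- `Sset x h M N` is the set `S(M,N)` of odd integers `u` with `M < u ≤ N` such that
`1 − h/u² ≤ {x/u²} < 1`, where `{θ}` denotes the fractional part. -/
def Sset (x h M N : ℝ) : Set ℤ :=
  {u : ℤ | Odd u ∧ M < (u : ℝ) ∧ (u : ℝ) ≤ N ∧
    1 - h / (u : ℝ) ^ 2 ≤ Int.fract (x / (u : ℝ) ^ 2) ∧ Int.fract (x / (u : ℝ) ^ 2) < 1}

lemma Sset_finite (x h M N : ℝ) : (Sset x h M N).Finite := by
  apply Set.Finite.subset (Set.finite_Icc ⌈M⌉ ⌊N⌋)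
  rintro n ⟨-, h1, h2, -⟩
  exact ⟨Int.ceil_le.mpr h1.le, Int.le_floor.mpr h2⟩

lemma ncard_biUnion_le {α : Type*} (K : ℕ) (f : ℕ → Set α) :
    (⋃ k ∈ Finset.range K, f k).ncard ≤ ∑ k ∈ Finset.range K, (f k).ncard := by
  induction K with
  | zero => simp
  | succ n ih =>
    rw [Finset.range_add_one, Finset.set_biUnion_insert, Finset.sum_insert (by simp)]
    exact le_trans (Set.ncard_union_le _ _) (by gcongr)

lemma pow_rpow_comm {a : ℝ} (ha : 0 ≤ a) (k : ℕ) (b : ℝ) : (a ^ k) ^ b = (a ^ b) ^ k := by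
  rw [← Real.rpow_natCast a k, ← Real.rpow_mul ha, mul_comm, Real.rpow_mul ha,
    Real.rpow_natCast]

/-- Lemma 1: covering `(x^u, x^v]` by dyadic-type intervals `(M, λM]`. -/
theorem card_Sset_of_card_Sset_ratio (x h lam A₁ A₂ A₃ b₁ b₂ u v : ℝ)
    (hx : 1 < x) (hh : 0 < h)
    (hA₁ : 0 < A₁) (hA₂ : 0 < A₂) (hA₃ : 0 < A₃) (hb₁ : 0 < b₁) (hb₂ : 0 < b₂)
    (hu : 0 < u) (huv : u < v) (hv : v < 1) (hlam : 1 < lam)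
    (hS : ∀ M : ℝ, x ^ u ≤ M → M ≤ x ^ v →
      ((Sset x h M (lam * M)).ncard : ℝ) ≤ A₁ * M ^ b₁ + A₂ * M ^ (-b₂) + A₃) :
    ((Sset x h (x ^ u) (x ^ v)).ncard : ℝ) ≤
      A₁ / (1 - lam ^ (-b₁)) * x ^ (b₁ * v) + A₂ / (1 - lam ^ (-b₂)) * x ^ (-b₂ * u) +
        A₃ * (v - u) / Real.log lam * Real.log x + A₃ := by
  have hx0 : (0:ℝ) < x := lt_trans one_pos hx
  have hlam0 : (0:ℝ) < lam := lt_trans one_pos hlam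
  have hlogx : 0 < Real.log x := Real.log_pos hx
  have hloglam : 0 < Real.log lam := Real.log_pos hlam
  set t : ℝ := (v - u) * Real.log x / Real.log lam with ht_def
  have ht0 : 0 < t := by
    apply div_pos _ hloglam
    exact mul_pos (by linarith) hlogx
  set K : ℕ := ⌈t⌉₊ with hK_def
  have hK1 : 1 ≤ K := Nat.one_le_iff_ne_zero.mpr (by
    simp only [hK_def, ne_eq, Nat.ceil_eq_zero, not_le]; exact ht0)
  have hKt : t ≤ (K : ℝ) := Nat.le_ceil t
  have hKt1 : (K : ℝ) ≤ t + 1 := (Nat.ceil_lt_add_one ht0.le).le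
  have hXpos : 0 < x ^ u := Real.rpow_pos_of_pos hx0 u
  set M : ℕ → ℝ := fun k => lam ^ k * x ^ u with hM_def
  have hMpos : ∀ k, 0 < M k := fun k => mul_pos (pow_pos hlam0 k) hXpos
  have hlam_t : lam ^ t = x ^ (v - u) := by
    rw [Real.rpow_def_of_pos hlam0, Real.rpow_def_of_pos hx0]
    congr 1
    field_simp [ht_def]
    rw [ht_def]; field_simp
  -- lam ^ (k : ℕ) ≤ lam ^ s for (k:ℝ) ≤ s, and conversely
  have hpow_le : ∀ (k : ℕ) (s : ℝ), (k : ℝ) ≤ s → (lam : ℝ) ^ k ≤ lam ^ s := by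
    intro k s hks
    rw [← Real.rpow_natCast lam k]
    exact Real.rpow_le_rpow_of_exponent_le hlam.le hks
  have hpow_ge : ∀ (k : ℕ) (s : ℝ), s ≤ (k : ℝ) → lam ^ s ≤ (lam : ℝ) ^ k := by
    intro k s hks
    rw [← Real.rpow_natCast lam k]
    exact Real.rpow_le_rpow_of_exponent_le hlam.le hks
  have hA : (lam : ℝ) ^ (K - 1) * x ^ u ≤ x ^ v := by
    have h1 : ((K - 1 : ℕ) : ℝ) ≤ t := by
      rw [Nat.cast_sub hK1]; push_cast; linarith
    calc (lam : ℝ) ^ (K - 1) * x ^ u ≤ lam ^ t * x ^ u := by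
          exact mul_le_mul_of_nonneg_right (hpow_le _ _ h1) hXpos.le
      _ = x ^ (v - u) * x ^ u := by rw [hlam_t]
      _ = x ^ v := by rw [← Real.rpow_add hx0]; ring_nf
  have hB : x ^ v ≤ (lam : ℝ) ^ K * x ^ u := by
    calc x ^ v = x ^ (v - u) * x ^ u := by rw [← Real.rpow_add hx0]; ring_nf
      _ = lam ^ t * x ^ u := by rw [hlam_t]
      _ ≤ (lam : ℝ) ^ K * x ^ u := mul_le_mul_of_nonneg_right (hpow_ge _ _ hKt) hXpos.le
  -- coverage
  have hcover : Sset x h (x ^ u) (x ^ v) ⊆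
      ⋃ k ∈ Finset.range K, Sset x h (M k) (lam * M k) := by
    rintro n ⟨hodd, h1, h2, hf1, hf2⟩
    set P : ℕ → Prop := fun k => lam ^ k * x ^ u < (n : ℝ) with hP_def
    have hP0 : P 0 := by simpa [hP_def] using h1
    set k : ℕ := Nat.findGreatest P (K - 1) with hk_def
    have hPk : P k := Nat.findGreatest_spec (Nat.zero_le _) hP0
    have hkle : k ≤ K - 1 := Nat.findGreatest_le _
    have hkK : k ∈ Finset.range K := Finset.mem_range.mpr (lt_of_le_of_lt hkle
      (Nat.sub_lt (lt_of_lt_of_le one_pos hK1) one_pos))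
    have hupper : (n : ℝ) ≤ lam * M k := by
      have : lam * M k = lam ^ (k + 1) * x ^ u := by
        simp [hM_def, pow_succ]; ring
      rw [this]
      by_cases hcase : k + 1 ≤ K - 1
      · have hnP : ¬ P (k + 1) :=
          Nat.findGreatest_is_greatest (Nat.lt_succ_self k) hcase
        simpa [hP_def, not_lt] using hnP
      · have hKk : K ≤ k + 1 := by omega
        have : (lam : ℝ) ^ K * x ^ u ≤ lam ^ (k + 1) * x ^ u := by
          apply mul_le_mul_of_nonneg_right _ hXpos.le
          exact pow_le_pow_right₀ hlam.le hKk
        linarith [hB]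
    exact Set.mem_biUnion hkK ⟨hodd, hPk, hupper, hf1, hf2⟩
  -- cardinality bound
  have hfinU : (⋃ k ∈ Finset.range K, Sset x h (M k) (lam * M k)).Finite :=
    Set.Finite.biUnion (Finset.finite_toSet _) (fun k _ => Sset_finite _ _ _ _)
  have hcard : ((Sset x h (x ^ u) (x ^ v)).ncard : ℝ) ≤
      ∑ k ∈ Finset.range K, ((Sset x h (M k) (lam * M k)).ncard : ℝ) := by
    have h1 := Set.ncard_le_ncard hcover hfinU
    have h2 := ncard_biUnion_le K (fun k => Sset x h (M k) (lam * M k))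
    calc ((Sset x h (x ^ u) (x ^ v)).ncard : ℝ)
        ≤ ((⋃ k ∈ Finset.range K, Sset x h (M k) (lam * M k)).ncard : ℝ) := by
          exact_mod_cast h1
      _ ≤ _ := by exact_mod_cast h2
  -- termwise bound
  have hMk_le : ∀ k ∈ Finset.range K, M k ≤ x ^ v := by
    intro k hk
    have hk' : k ≤ K - 1 := by have := Finset.mem_range.mp hk; omega
    calc M k ≤ lam ^ (K - 1) * x ^ u := by
          apply mul_le_mul_of_nonneg_right _ hXpos.le
          exact pow_le_pow_right₀ hlam.le hk'
      _ ≤ x ^ v := hA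
  have hMk_ge : ∀ k : ℕ, x ^ u ≤ M k := by
    intro k
    have : (1:ℝ) ≤ lam ^ k := one_le_pow₀ hlam.le
    calc x ^ u = 1 * x ^ u := (one_mul _).symm
      _ ≤ M k := mul_le_mul_of_nonneg_right this hXpos.le
  have hterm : ∀ k ∈ Finset.range K,
      ((Sset x h (M k) (lam * M k)).ncard : ℝ) ≤
        A₁ * (M k) ^ b₁ + A₂ * (M k) ^ (-b₂) + A₃ :=
    fun k hk => hS (M k) (hMk_ge k) (hMk_le k hk)
  have hsum1 : ((Sset x h (x ^ u) (x ^ v)).ncard : ℝ) ≤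
      ∑ k ∈ Finset.range K, (A₁ * (M k) ^ b₁ + A₂ * (M k) ^ (-b₂) + A₃) :=
    le_trans hcard (Finset.sum_le_sum hterm)
  -- geometric sums
  set r : ℝ := lam ^ b₁ with hr_def
  set s : ℝ := lam ^ (-b₂) with hs_def
  have hr1 : 1 < r := by
    rw [hr_def]
    calc (1:ℝ) = lam ^ (0:ℝ) := (Real.rpow_zero lam).symm
      _ < lam ^ b₁ := Real.rpow_lt_rpow_of_exponent_lt hlam hb₁
  have hs0 : 0 < s := Real.rpow_pos_of_pos hlam0 _
  have hs1 : s < 1 := by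
    rw [hs_def]
    calc lam ^ (-b₂) < lam ^ (0:ℝ) :=
          Real.rpow_lt_rpow_of_exponent_lt hlam (by linarith)
      _ = 1 := Real.rpow_zero lam
  have hrinv : lam ^ (-b₁) = r⁻¹ := by
    rw [hr_def, Real.rpow_neg hlam0.le]
  -- rewrite M k ^ b₁ and M k ^ (-b₂)
  have hMb₁ : ∀ k, (M k) ^ b₁ = r ^ k * (x ^ u) ^ b₁ := by
    intro k
    rw [hM_def]
    simp only
    rw [Real.mul_rpow (pow_pos hlam0 k).le hXpos.le, pow_rpow_comm hlam0.le]
  have hMb₂ : ∀ k, (M k) ^ (-b₂) = s ^ k * (x ^ u) ^ (-b₂) := by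
    intro k
    rw [hM_def]
    simp only
    rw [Real.mul_rpow (pow_pos hlam0 k).le hXpos.le, pow_rpow_comm hlam0.le]
  -- Sum 1
  have hgeom1 : ∑ k ∈ Finset.range K, r ^ k = (r ^ K - 1) / (r - 1) :=
    geom_sum_eq hr1.ne' K
  have hbound1 : ∑ k ∈ Finset.range K, A₁ * (M k) ^ b₁ ≤
      A₁ / (1 - lam ^ (-b₁)) * x ^ (b₁ * v) := by
    have key : (x ^ u) ^ b₁ * r ^ (K - 1) ≤ x ^ (b₁ * v) := by
      have h1 : (x ^ u) ^ b₁ * r ^ (K - 1) = (lam ^ (K - 1) * x ^ u) ^ b₁ := by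
        rw [Real.mul_rpow (pow_pos hlam0 _).le hXpos.le, pow_rpow_comm hlam0.le, mul_comm]
      rw [h1, mul_comm b₁ v, Real.rpow_mul hx0.le]
      exact Real.rpow_le_rpow (mul_pos (pow_pos hlam0 _) hXpos).le hA hb₁.le
    have hden : 1 - lam ^ (-b₁) = (r - 1) / r := by
      rw [hrinv]; field_simp
    calc ∑ k ∈ Finset.range K, A₁ * (M k) ^ b₁
        = A₁ * ((x ^ u) ^ b₁ * ((r ^ K - 1) / (r - 1))) := by
          simp_rw [hMb₁]
          rw [← Finset.mul_sum, ← Finset.sum_mul, hgeom1]; ring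
      _ ≤ A₁ * ((x ^ u) ^ b₁ * (r ^ K / (r - 1))) := by
          apply mul_le_mul_of_nonneg_left _ hA₁.le
          apply mul_le_mul_of_nonneg_left _ (Real.rpow_pos_of_pos hXpos _).le
          apply div_le_div_of_nonneg_right _ (by linarith)
          · linarith
      _ = A₁ * ((x ^ u) ^ b₁ * r ^ (K - 1)) * (r / (r - 1)) := by
          have : r ^ K = r ^ (K - 1) * r := by
            conv_lhs => rw [show K = (K - 1) + 1 by omega]
            rw [pow_succ]
          rw [this]; field_simp
      _ ≤ A₁ * x ^ (b₁ * v) * (r / (r - 1)) := by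
          apply mul_le_mul_of_nonneg_right _ (div_nonneg (by linarith) (by linarith))
          exact mul_le_mul_of_nonneg_left key hA₁.le
      _ = A₁ / (1 - lam ^ (-b₁)) * x ^ (b₁ * v) := by
          rw [hden]; field_simp
  -- Sum 2
  have hbound2 : ∑ k ∈ Finset.range K, A₂ * (M k) ^ (-b₂) ≤
      A₂ / (1 - lam ^ (-b₂)) * x ^ (-b₂ * u) := by
    have hgeom2 : ∑ k ∈ Finset.range K, s ^ k ≤ 1 / (1 - s) := by
      rw [geom_sum_eq hs1.ne K,
        show (s ^ K - 1) / (s - 1) = (1 - s ^ K) / (1 - s) by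
          rw [← neg_div_neg_eq]; ring_nf]
      exact div_le_div₀ (by norm_num) (by nlinarith [pow_pos hs0 K]) (by linarith) le_rfl
    have hxub : (x ^ u) ^ (-b₂) = x ^ (-b₂ * u) := by
      rw [← Real.rpow_mul hx0.le, mul_comm]
    calc ∑ k ∈ Finset.range K, A₂ * (M k) ^ (-b₂)
        = A₂ * (x ^ u) ^ (-b₂) * ∑ k ∈ Finset.range K, s ^ k := by
          simp_rw [hMb₂, Finset.mul_sum]
          exact Finset.sum_congr rfl fun k _ => by ring
      _ ≤ A₂ * (x ^ u) ^ (-b₂) * (1 / (1 - s)) := by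
          apply mul_le_mul_of_nonneg_left hgeom2 (by positivity)
      _ = A₂ / (1 - lam ^ (-b₂)) * x ^ (-b₂ * u) := by
          rw [hxub, ← hs_def]; field_simp
  -- Sum 3
  have hbound3 : ∑ k ∈ Finset.range K, A₃ ≤
      A₃ * (v - u) / Real.log lam * Real.log x + A₃ := by
    rw [Finset.sum_const, Finset.card_range, nsmul_eq_mul]
    have : A₃ * (v - u) / Real.log lam * Real.log x = A₃ * t := by
      rw [ht_def]; field_simp
    rw [this]
    have h2 : (K : ℝ) * A₃ ≤ (t + 1) * A₃ := mul_le_mul_of_nonneg_right hKt1 hA₃.le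
    linarith
  calc ((Sset x h (x ^ u) (x ^ v)).ncard : ℝ)
      ≤ ∑ k ∈ Finset.range K, (A₁ * (M k) ^ b₁ + A₂ * (M k) ^ (-b₂) + A₃) := hsum1
    _ = (∑ k ∈ Finset.range K, A₁ * (M k) ^ b₁) +
        (∑ k ∈ Finset.range K, A₂ * (M k) ^ (-b₂)) +
        (∑ k ∈ Finset.range K, A₃) := by
          rw [Finset.sum_add_distrib, Finset.sum_add_distrib]
    _ ≤ _ := by
          have := add_le_add (add_le_add hbound1 hbound2) hbound3
          linarith
end

section
/- Let x ≥ e^{41}, 1000 ≤ h ≤ 2·x^{1/3}, let λ ∈ (1, 2], and let H, M be reals with h ≤ H ≤ M ≤ √(2x) and H ≥ 1000. If u and u + a (with a a positive integer) are two distinct elements of S(M), then a > 0.4995·x^{-1}·M³. -/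
set_option maxHeartbeats 800000


/-- Lemma 3 (spacing for pairs): two distinct elements of `S(M)` differ by more than
`0.4995·x⁻¹·M³`. -/
theorem pair_spacing (x h lam H M : ℝ) (u a : ℤ)
    (hx : Real.exp 41 ≤ x) (hh1 : (1000 : ℝ) ≤ h) (hh2 : h ≤ 2 * x ^ ((1 : ℝ) / 3))
    (hlam1 : 1 < lam) (hlam2 : lam ≤ 2)
    (hhH : h ≤ H) (hHM : H ≤ M) (hM : M ≤ Real.sqrt (2 * x)) (hH : (1000 : ℝ) ≤ H)
    (ha : 0 < a)
    (hu : u ∈ Sset x h M (lam * M)) (hua : u + a ∈ Sset x h M (lam * M)) :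
    (a : ℝ) > 0.4995 * x⁻¹ * M ^ 3 := by
  obtain ⟨huo, huM, huL, huf1, huf2⟩ := hu
  obtain ⟨hvo, hvM, hvL, hvf1, hvf2⟩ := hua
  set U : ℝ := (u : ℝ) with hUdef
  have hVcast : ((u + a : ℤ) : ℝ) = U + (a : ℝ) := by push_cast; ring
  rw [hVcast] at hvM hvL hvf1 hvf2
  set V : ℝ := U + (a : ℝ) with hVdef
  clear_value U V
  have hx0 : (0:ℝ) < x := lt_of_lt_of_le (Real.exp_pos 41) hx
  have hM1000 : (1000:ℝ) ≤ M := le_trans hH hHM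
  have hM0 : (0:ℝ) < M := by linarith
  have hhM : h ≤ M := le_trans hhH hHM
  have hh0 : (0:ℝ) < h := by linarith
  have hU0 : (0:ℝ) < U := lt_trans hM0 huM
  have hM2pos : (0:ℝ) < M^2 := pow_pos hM0 2
  have ha1 : (1:ℝ) ≤ (a:ℝ) := by exact_mod_cast ha
  have hUV : U < V := by rw [hVdef]; linarith
  have hV0 : (0:ℝ) < V := by linarith
  have hU2pos : (0:ℝ) < U^2 := pow_pos hU0 2
  have hV2pos : (0:ℝ) < V^2 := by positivity
  have hUV2pos : (0:ℝ) < U^2*V^2 := mul_pos hU2pos hV2pos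
  have hU2M : U ≤ 2*M := le_trans huL (by nlinarith)
  have hV2M : V ≤ 2*M := le_trans hvL (by nlinarith)
  -- a is even, hence ≥ 2
  have haeven : Even a := by
    have h1 : Even ((u + a) - u) := Odd.sub_odd hvo huo
    simpa using h1
  have ha2' : (2:ℝ) ≤ (a:ℝ) := by
    have : (2:ℤ) ≤ a := by obtain ⟨k, hk⟩ := haeven; omega
    exact_mod_cast this
  -- x > 4 h M
  have hcube : h^3 ≤ 8 * x := by
    have h1 : h^3 ≤ (2 * x ^ ((1:ℝ)/3))^3 := pow_le_pow_left₀ hh0.le hh2 3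
    have h2 : (x ^ ((1:ℝ)/3))^3 = x := by
      rw [← Real.rpow_natCast (x ^ ((1:ℝ)/3)) 3, ← Real.rpow_mul hx0.le]
      norm_num
    calc h^3 ≤ (2 * x ^ ((1:ℝ)/3))^3 := h1
      _ = 8 * (x ^ ((1:ℝ)/3))^3 := by ring
      _ = 8 * x := by rw [h2]
  have hsq : M^2 ≤ 2 * x := by
    have h1 := Real.sq_sqrt (by linarith : (0:ℝ) ≤ 2*x)
    nlinarith [Real.sqrt_nonneg (2*x)]
  have hxbig : (2:ℝ)^21 < x := by
    have h2e : (2:ℝ) ≤ Real.exp 1 := by linarith [Real.add_one_le_exp (1:ℝ)]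
    have h41a : (2:ℝ)^41 ≤ (Real.exp 1)^41 := pow_le_pow_left₀ (by norm_num) h2e 41
    have h41b : (Real.exp 1)^41 = Real.exp 41 := by
      rw [← Real.exp_nat_mul]; norm_num
    have h21 : (2:ℝ)^21 < (2:ℝ)^41 := by norm_num
    rw [h41b] at h41a
    linarith
  have hxhM : 4 * h * M < x := by
    have h6 : (4*h*M)^6 ≤ 2^21 * x^5 := by
      have e1 : (h^3)^2 ≤ (8*x)^2 := pow_le_pow_left₀ (by positivity) hcube 2
      have e2 : (M^2)^3 ≤ (2*x)^3 := pow_le_pow_left₀ (by positivity) hsq 3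
      have e3 : (h^3)^2 * (M^2)^3 ≤ (8*x)^2 * (2*x)^3 :=
        mul_le_mul e1 e2 (by positivity) (by positivity)
      have e4 : 4096 * ((h^3)^2 * (M^2)^3) ≤ 4096 * ((8*x)^2 * (2*x)^3) :=
        mul_le_mul_of_nonneg_left e3 (by norm_num)
      calc (4*h*M)^6 = 4096 * ((h^3)^2 * (M^2)^3) := by ring
        _ ≤ 4096 * ((8*x)^2 * (2*x)^3) := e4
        _ = 2^21 * x^5 := by ring
    have h7 : (4*h*M)^6 < x^6 := by
      have : (2:ℝ)^21 * x^5 < x * x^5 := by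
        have h5 : (0:ℝ) < x^5 := pow_pos hx0 5
        nlinarith
      calc (4*h*M)^6 ≤ 2^21 * x^5 := h6
        _ < x * x^5 := this
        _ = x^6 := by ring
    exact lt_of_pow_lt_pow_left₀ 6 hx0.le h7
  -- fractional part setup
  set p : ℝ := x / U^2 with hpdef
  set q : ℝ := x / V^2 with hqdef
  clear_value p q
  have hDpos : 0 < p - q := by
    have hUV2 : U^2 < V^2 := by
      apply pow_lt_pow_left₀ hUV hU0.le
      norm_num
    have : q < p := by
      rw [hpdef, hqdef]
      exact div_lt_div_of_pos_left hx0 hU2pos hUV2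
    linarith
  have hpq : (p - q) * (U^2 * V^2) = x * (a:ℝ) * (U + V) := by
    rw [hpdef, hqdef, hVdef]
    field_simp
    ring
  -- δ bounds
  have hfM : h / M^2 ≤ 1/1000 := by
    rw [div_le_div_iff₀ (by positivity) (by norm_num)]
    nlinarith
  have hδu2 : 1 - Int.fract p ≤ h / U^2 := by linarith
  have hδv2 : 1 - Int.fract q ≤ h / V^2 := by linarith
  have hMU2 : M^2 < U^2 := by
    apply pow_lt_pow_left₀ huM hM0.le
    norm_num
  have hMV2 : M^2 < V^2 := by
    apply pow_lt_pow_left₀ (by linarith : M < V) hM0.le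
    norm_num
  have hfu : h / U^2 < h / M^2 :=
    div_lt_div_of_pos_left hh0 hM2pos hMU2
  have hfv : h / V^2 < h / M^2 :=
    div_lt_div_of_pos_left hh0 hM2pos hMV2
  have hδu_small : 1 - Int.fract p < 1/1000 := by linarith
  have hδv_small : 1 - Int.fract q < 1/1000 := by linarith
  have hδu_pos : 0 < 1 - Int.fract p := by linarith
  have hδv_pos : 0 < 1 - Int.fract q := by linarith
  -- proceed by contradiction
  by_contra hcon
  push_neg at hcon
  have h2ax : 2*(a:ℝ)*x ≤ 0.999 * M^3 := by
    have e : 0.4995 * x⁻¹ * M^3 * x = 0.4995 * M^3 := by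
      field_simp
    have h1 : (a:ℝ) * x ≤ 0.4995 * x⁻¹ * M^3 * x :=
      mul_le_mul_of_nonneg_right hcon hx0.le
    rw [e] at h1
    linarith
  -- upper bound: p - q < 0.999
  have hM3 : M^3 < U^2 * V := by
    have t1 : M^2 * M < U^2 * V :=
      mul_lt_mul'' hMU2 (by linarith : M < V) hM2pos.le hM0.le
    linarith [t1]
  have hDlt : p - q < 0.999 := by
    have key : (p - q) * (U^2*V^2) < 0.999 * (U^2*V^2) := by
      rw [hpq]
      have step1 : x*(a:ℝ)*(U+V) < 2*(a:ℝ)*x*V := by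
        have t1 : (x*(a:ℝ))*(U+V) < (x*(a:ℝ))*(2*V) :=
          mul_lt_mul_of_pos_left (by linarith : U+V < 2*V)
            (mul_pos hx0 (by linarith : (0:ℝ) < (a:ℝ)))
        linarith [t1]
      have step2 : 2*(a:ℝ)*x*V ≤ 0.999*M^3*V :=
        mul_le_mul_of_nonneg_right h2ax hV0.le
      have step3 : 0.999*M^3*V < 0.999*(U^2*V^2) := by
        linarith [mul_lt_mul_of_pos_right hM3 hV0]
      linarith
    exact lt_of_mul_lt_mul_right key hUV2pos.le
  -- the floor difference is zero
  set n : ℤ := ⌊p⌋ - ⌊q⌋ with hndef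
  have hsplit : p - q = (n:ℝ) + (Int.fract p - Int.fract q) := by
    have e1 := Int.floor_add_fract p
    have e2 := Int.floor_add_fract q
    rw [hndef]
    push_cast
    linarith
  have hn0 : n = 0 := by
    have h1 : (n:ℝ) < 1 := by
      have : Int.fract p - Int.fract q = (1 - Int.fract q) - (1 - Int.fract p) := by ring
      rw [this] at hsplit
      linarith
    have h2 : (-1:ℝ) < (n:ℝ) := by linarith
    have h1' : n < 1 := by exact_mod_cast h1
    have h2' : (-1:ℤ) < n := by exact_mod_cast h2
    omega
  -- hence p - q < h/M²
  have hup : p - q < h / M^2 := by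
    rw [hn0] at hsplit
    simp at hsplit
    have : Int.fract p - Int.fract q = (1 - Int.fract q) - (1 - Int.fract p) := by ring
    linarith
  -- lower bound: p - q > 4xM/(16M⁴)
  have hlow : 4*x*M < (p - q) * (16 * M^4) := by
    have h1 : 4*x*M < x*(a:ℝ)*(U+V) := by
      have t1 : 2*(U+V) ≤ (a:ℝ)*(U+V) :=
        mul_le_mul_of_nonneg_right ha2' (by linarith)
      have t2 : x*(2*(U+V)) ≤ x*((a:ℝ)*(U+V)) :=
        mul_le_mul_of_nonneg_left t1 hx0.le
      have t3 : x*(2*M) < x*(U+V) :=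
        mul_lt_mul_of_pos_left (by linarith : 2*M < U+V) hx0
      linarith [t2, t3]
    have h2 : (p-q)*(U^2*V^2) ≤ (p-q)*(16*M^4) := by
      apply mul_le_mul_of_nonneg_left _ hDpos.le
      have e1 : U^2 ≤ (2*M)^2 := pow_le_pow_left₀ hU0.le hU2M 2
      have e2 : V^2 ≤ (2*M)^2 := pow_le_pow_left₀ hV0.le hV2M 2
      have e3 : U^2*V^2 ≤ (2*M)^2*((2*M)^2) :=
        mul_le_mul e1 e2 hV2pos.le (by positivity)
      linarith [e3]
    linarith [hpq ▸ h2]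
  -- contradiction
  have hfinal : (p - q) * (16*M^4) < 16 * h * M^2 := by
    have e : h/M^2 * (16*M^4) = 16*h*M^2 := by
      field_simp
    have := mul_lt_mul_of_pos_right hup (show (0:ℝ) < 16*M^4 by positivity)
    rw [e] at this
    exact this
  linarith [mul_lt_mul_of_pos_right hxhM hM0, hfinal, hlow]
end

section
/- Let x ≥ e^{41}, 1000 ≤ h ≤ 2·x^{1/3}, let λ ∈ (1, 2], and let H, M be reals with h ≤ H ≤ M ≤ √(2x) and H ≥ 1000. Then the number of elements of S(M) satisfies |S(M)| ≤ (0.4995)^{-1}·(λ − 1)·x·M^{-2} + 1. -/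
/-- Numeric input: `999 h M ≤ 4 x` under the size hypotheses. -/
lemma aux_num_999 {x h M : ℝ} (hx : Real.exp 41 ≤ x) (hh0 : 0 < h) (hM0 : 0 < M)
    (hh2 : h ≤ 2 * x ^ ((1 : ℝ) / 3)) (hMx2 : M ^ 2 ≤ 2 * x) : 999 * h * M ≤ 4 * x := by
  have hx0 : (0:ℝ) < x := lt_of_lt_of_le (Real.exp_pos 41) hx
  set s := x ^ ((1:ℝ)/6) with hsdef
  have hs0 : (0:ℝ) < s := Real.rpow_pos_of_pos hx0 _
  have hs6 : s^6 = x := by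
    rw [hsdef, ← Real.rpow_natCast (x ^ ((1:ℝ)/6)) 6, ← Real.rpow_mul hx0.le]
    norm_num
  have hs2 : x ^ ((1:ℝ)/3) = s^2 := by
    rw [hsdef, ← Real.rpow_natCast (x ^ ((1:ℝ)/6)) 2, ← Real.rpow_mul hx0.le]
    norm_num
  have hs708 : (708:ℝ) ≤ s := by
    have hexp : ((708:ℝ)^6) ≤ x := by
      refine le_trans ?_ hx
      have h2 : (2.7182818283:ℝ)^(41:ℕ) ≤ (Real.exp 1)^(41:ℕ) :=
        pow_le_pow_left₀ (by norm_num) Real.exp_one_gt_d9.le 41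
      have h3 : (Real.exp 1)^(41:ℕ) = Real.exp 41 := by
        rw [← Real.exp_nat_mul]; norm_num
      have h4 : (708:ℝ)^6 ≤ (2.7182818283:ℝ)^(41:ℕ) := by norm_num
      linarith
    calc (708:ℝ) = ((708:ℝ)^6) ^ ((1:ℝ)/6) := by
          rw [← Real.rpow_natCast (708:ℝ) 6, ← Real.rpow_mul (by norm_num)]; norm_num
      _ ≤ x ^ ((1:ℝ)/6) := Real.rpow_le_rpow (by positivity) hexp (by norm_num)
  have hhs : h ≤ 2*s^2 := by rw [← hs2]; linarith
  have hMs : M^2 ≤ 2*s^6 := by rw [hs6]; exact hMx2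
  have e1 : h^2 ≤ 4*s^4 := by nlinarith
  have e2 : h^2 * M^2 ≤ 8 * s^10 := by
    nlinarith [sq_nonneg M, sq_nonneg s, pow_nonneg hs0.le 4, pow_nonneg hs0.le 6]
  have hs2' : (501264:ℝ) ≤ s^2 := by nlinarith
  have e3 : (998001:ℝ) * s^10 ≤ 2 * s^12 := by
    nlinarith [mul_le_mul_of_nonneg_left hs2' (pow_nonneg hs0.le 10)]
  have hsq2 : (999*h*M)^2 ≤ (4*x)^2 := by
    calc (999*h*M)^2 = 998001 * (h^2 * M^2) := by ring
      _ ≤ 998001 * (8 * s^10) := by linarith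
      _ ≤ 16 * s^12 := by linarith
      _ = (4*x)^2 := by rw [← hs6]; ring
  nlinarith [mul_pos (mul_pos (by norm_num : (0:ℝ)<999) hh0) hM0]

/-- The gap between `x/u²` and `x/v²` for nearby `u < v` exceeds `h/M²`. -/
lemma aux_gap {x h M u v : ℝ} (hx0 : 0 < x) (hM0 : 0 < M) (hh0 : 0 < h)
    (hx4 : 4 * h * M ≤ x) (hMu : M < u) (huN : u ≤ 2 * M) (hMv : M < v) (hvN : v ≤ 2 * M)
    (huv : u + 2 ≤ v) : h / M ^ 2 ≤ x / u ^ 2 - x / v ^ 2 := by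
  have hu0 : (0:ℝ) < u := lt_trans hM0 hMu
  have hv0 : (0:ℝ) < v := lt_trans hM0 hMv
  have huu : (0:ℝ) < u^2 := by positivity
  have hvv : (0:ℝ) < v^2 := by positivity
  rw [div_sub_div _ _ (ne_of_gt huu) (ne_of_gt hvv),
    div_le_div_iff₀ (by positivity) (by positivity)]
  have e1 : 4*M ≤ v^2 - u^2 := by
    nlinarith [mul_nonneg (by linarith : (0:ℝ) ≤ v - u - 2) (by linarith : (0:ℝ) ≤ v + u)]
  have hu2' : u^2 ≤ 4*M^2 := by nlinarith
  have hv2' : v^2 ≤ 4*M^2 := by nlinarith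
  have e2 : u^2 * v^2 ≤ 16*M^4 := by
    nlinarith [mul_le_mul hu2' hv2' (sq_nonneg v) (by positivity : (0:ℝ) ≤ 4*M^2)]
  have e3 : h * (u^2 * v^2) ≤ h * (16*M^4) := mul_le_mul_of_nonneg_left e2 hh0.le
  have e4 : (4*h*M)*(4*M^3) ≤ x*(4*M^3) := mul_le_mul_of_nonneg_right hx4 (by positivity)
  have e5 : x * M^2 * (4*M) ≤ x * M^2 * (v^2 - u^2) :=
    mul_le_mul_of_nonneg_left e1 (by positivity)
  nlinarith [e3, e4, e5]

/-- Counting integers via an injection into a real interval `(A, B]`. -/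
lemma aux_count {S : Set ℤ} {f : ℤ → ℤ} {A B : ℝ} (hAB : A ≤ B)
    (hinj : Set.InjOn f S) (hbd : ∀ u ∈ S, A < (f u : ℝ) ∧ (f u : ℝ) ≤ B) :
    (S.ncard : ℝ) ≤ B - A + 1 := by
  have himg : f '' S ⊆ ↑(Finset.Icc (⌊A⌋+1) ⌊B⌋) := by
    rintro w ⟨u, hu, rfl⟩
    obtain ⟨h1, h2⟩ := hbd u hu
    simp only [Finset.coe_Icc, Set.mem_Icc]
    have hA := Int.floor_lt.mpr h1
    exact ⟨by omega, Int.le_floor.mpr h2⟩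
  have h1 : S.ncard ≤ (Finset.Icc (⌊A⌋+1) ⌊B⌋).card := by
    rw [← Set.ncard_image_of_injOn hinj]
    calc (f '' S).ncard ≤ ((Finset.Icc (⌊A⌋+1) ⌊B⌋ : Finset ℤ) : Set ℤ).ncard :=
          Set.ncard_le_ncard himg (Finset.finite_toSet _)
      _ = (Finset.Icc (⌊A⌋+1) ⌊B⌋).card := Set.ncard_coe_finset _
  have h2 : (Finset.Icc (⌊A⌋+1) ⌊B⌋).card = (⌊B⌋ - ⌊A⌋).toNat := by
    rw [Int.card_Icc]; congr 1; ring
  have hfl : ⌊A⌋ ≤ ⌊B⌋ := Int.floor_le_floor hAB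
  have h3 : ((⌊B⌋ - ⌊A⌋).toNat : ℝ) = (⌊B⌋ : ℝ) - (⌊A⌋ : ℝ) := by
    have h0 : (0:ℤ) ≤ ⌊B⌋ - ⌊A⌋ := by omega
    calc ((⌊B⌋ - ⌊A⌋).toNat : ℝ) = (((⌊B⌋ - ⌊A⌋).toNat : ℤ) : ℝ) := by norm_cast
      _ = ((⌊B⌋ - ⌊A⌋ : ℤ) : ℝ) := by rw [Int.toNat_of_nonneg h0]
      _ = (⌊B⌋ : ℝ) - (⌊A⌋ : ℝ) := by push_cast; ring
  have h4 : (⌊B⌋ : ℝ) ≤ B := Int.floor_le B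
  have h5 : A < (⌊A⌋ : ℝ) + 1 := Int.lt_floor_add_one A
  calc (S.ncard : ℝ) ≤ ((⌊B⌋ - ⌊A⌋).toNat : ℝ) := by exact_mod_cast h1.trans_eq h2
    _ = (⌊B⌋ : ℝ) - (⌊A⌋ : ℝ) := h3
    _ ≤ B - A + 1 := by linarith

/-- Final arithmetic estimate. -/
lemma aux_final {x h lam M : ℝ} (hx0 : 0 < x) (hM0 : 0 < M) (hlam1 : 1 < lam)
    (hhC : 999 * h ≤ 2 * (lam - 1) * x) :
    x / M ^ 2 + h / M ^ 2 - x / (lam * M) ^ 2 ≤ 2000 / 999 * (lam - 1) * x / M ^ 2 := by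
  have hl2 : (0:ℝ) < lam^2 := by positivity
  have hA' : x / (lam * M)^2 = x / lam^2 / M^2 := by rw [mul_pow, div_div]
  set t : ℝ := x / lam^2 with htdef
  have ht : t * lam^2 = x := div_mul_cancel₀ _ (ne_of_gt hl2)
  have ht0 : 0 ≤ t := by positivity
  have hnum : x + h - t ≤ 2000/999 * (lam - 1) * x := by
    have hq : 0 ≤ t * ((lam - 1) * (2*lam^2 - lam - 1)) := by
      apply mul_nonneg ht0
      apply mul_nonneg (by linarith)
      nlinarith
    nlinarith
  rw [hA', ← add_div, ← sub_div, div_le_div_iff₀ (by positivity) (by positivity)]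
  nlinarith [sq_nonneg M]

set_option maxHeartbeats 1000000 in
/-- Corollary 1: bound on the cardinality of `S(M)`. -/
theorem card_Sset_pair (x h lam H M : ℝ)
    (hx : Real.exp 41 ≤ x) (hh1 : (1000 : ℝ) ≤ h) (hh2 : h ≤ 2 * x ^ ((1 : ℝ) / 3))
    (hlam1 : 1 < lam) (hlam2 : lam ≤ 2)
    (hhH : h ≤ H) (hHM : H ≤ M) (hM : M ≤ Real.sqrt (2 * x)) (hH : (1000 : ℝ) ≤ H) :
    ((Sset x h M (lam * M)).ncard : ℝ) ≤ (0.4995 : ℝ)⁻¹ * (lam - 1) * x * M ^ (-(2 : ℝ)) + 1 := by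
  have hx0 : (0:ℝ) < x := lt_of_lt_of_le (Real.exp_pos 41) hx
  have hM0 : (0:ℝ) < M := by linarith
  have hh0 : (0:ℝ) < h := by linarith
  have hlam0 : (0:ℝ) < lam := by linarith
  have hMrp : M ^ (-(2:ℝ)) = (M^2)⁻¹ := by
    rw [show (-(2:ℝ)) = -((2:ℕ):ℝ) by norm_num, Real.rpow_neg hM0.le, Real.rpow_natCast]
  have hc : (0.4995:ℝ)⁻¹ = 2000/999 := by norm_num
  have hMx2 : M^2 ≤ 2*x := by
    have h1 : M^2 ≤ (Real.sqrt (2*x))^2 := pow_le_pow_left₀ hM0.le hM 2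
    rwa [Real.sq_sqrt (by linarith)] at h1
  have h999 : 999*h*M ≤ 4*x := aux_num_999 hx hh0 hM0 hh2 hMx2
  have hx4 : 4*h*M ≤ x := by nlinarith
  clear hx hh2 hM hh1 hhH hHM hH
  set S := Sset x h M (lam * M) with hSdef
  by_cases hsmall : (lam - 1) * M ≤ 2
  · -- at most one element
    have hsub : S.Subsingleton := by
      intro u hu v hv
      obtain ⟨hou, hMu, huN, -, -⟩ := hu
      obtain ⟨hov, hMv, hvN, -, -⟩ := hv
      by_contra hne
      rcases lt_or_gt_of_ne hne with hlt | hlt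
      · obtain ⟨a, ha⟩ := hou; obtain ⟨b, hb⟩ := hov
        have h2 : u + 2 ≤ v := by omega
        have : ((u:ℝ) + 2) ≤ (v:ℝ) := by exact_mod_cast h2
        linarith
      · obtain ⟨a, ha⟩ := hou; obtain ⟨b, hb⟩ := hov
        have h2 : v + 2 ≤ u := by omega
        have : ((v:ℝ) + 2) ≤ (u:ℝ) := by exact_mod_cast h2
        linarith
    have hle1 : S.ncard ≤ 1 := by
      rcases hsub.eq_empty_or_singleton with he | ⟨a, he⟩ <;> simp [he]
    have hpos : 0 ≤ (0.4995:ℝ)⁻¹ * (lam - 1) * x * M ^ (-(2:ℝ)) := by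
      rw [hMrp]; have : (0:ℝ) ≤ lam - 1 := by linarith
      positivity
    have : ((S.ncard : ℝ)) ≤ 1 := by exact_mod_cast hle1
    linarith
  · push_neg at hsmall
    have hhC : 999 * h ≤ 2 * (lam - 1) * x := by
      have h1 : 2*x ≤ ((lam-1)*M)*x := mul_le_mul_of_nonneg_right hsmall.le hx0.le
      have h2 : 999*h*M ≤ (2*(lam-1)*x)*M := by nlinarith
      exact le_of_mul_le_mul_right h2 hM0
    set f : ℤ → ℤ := fun u => ⌊x / (u:ℝ)^2⌋ + 1 with hfdef
    have hmem : ∀ u ∈ S, x / (u:ℝ)^2 < (f u : ℝ) ∧ (f u : ℝ) ≤ x / (u:ℝ)^2 + h / (u:ℝ)^2 ∧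
        M < (u:ℝ) ∧ (u:ℝ) ≤ lam * M := by
      intro u hu
      obtain ⟨-, hMu, huN, hf1, hf2⟩ := hu
      have hfl := Int.floor_add_fract (x / (u:ℝ)^2)
      have hcast : (f u : ℝ) = (⌊x / (u:ℝ)^2⌋ : ℝ) + 1 := by rw [hfdef]; push_cast; ring
      refine ⟨by rw [hcast]; linarith, by rw [hcast]; linarith, hMu, huN⟩
    have hlamM : lam * M ≤ 2 * M := by nlinarith
    have hanti : ∀ u ∈ S, ∀ v ∈ S, u < v → f v < f u := by
      intro u hu v hv huv
      obtain ⟨hu1, hu2, hMu, huN⟩ := hmem u hu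
      obtain ⟨hv1, hv2, hMv, hvN⟩ := hmem v hv
      obtain ⟨a, ha⟩ := hu.1
      obtain ⟨b, hb⟩ := hv.1
      have h2 : u + 2 ≤ v := by omega
      have hab : ((u:ℝ) + 2) ≤ (v:ℝ) := by exact_mod_cast h2
      have hgap : h / M^2 ≤ x / (u:ℝ)^2 - x / (v:ℝ)^2 :=
        aux_gap hx0 hM0 hh0 hx4 hMu (le_trans huN hlamM) hMv (le_trans hvN hlamM) hab
      have hhv : h / (v:ℝ)^2 ≤ h / M^2 := by
        apply div_le_div_of_nonneg_left hh0.le (by positivity)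
        nlinarith
      have : (f v : ℝ) < (f u : ℝ) := by linarith
      exact_mod_cast this
    have hinj : Set.InjOn f S := by
      intro u hu v hv hfe
      by_contra hne
      rcases lt_or_gt_of_ne hne with hlt | hlt
      · exact absurd hfe (ne_of_gt (hanti u hu v hv hlt))
      · exact absurd hfe (ne_of_gt (hanti v hv u hu hlt)).symm
    have hbd : ∀ u ∈ S, x / (lam * M)^2 < (f u : ℝ) ∧
        (f u : ℝ) ≤ x / M^2 + h / M^2 := by
      intro u hu
      obtain ⟨hu1, hu2, hMu, huN⟩ := hmem u hu
      have hu0 : (0:ℝ) < (u:ℝ) := by linarith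
      have huu : (0:ℝ) < (u:ℝ)^2 := by positivity
      constructor
      · have hAu : x / (lam * M)^2 ≤ x / (u:ℝ)^2 := by
          apply div_le_div_of_nonneg_left hx0.le huu
          nlinarith
        linarith
      · have hxu : x / (u:ℝ)^2 ≤ x / M^2 :=
          div_le_div_of_nonneg_left hx0.le (by positivity) (by nlinarith)
        have hhu : h / (u:ℝ)^2 ≤ h / M^2 :=
          div_le_div_of_nonneg_left hh0.le (by positivity) (by nlinarith)
        linarith
    have hAB : x / (lam * M)^2 ≤ x / M^2 + h / M^2 := by
      have h1 : x / (lam * M)^2 ≤ x / M^2 := by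
        apply div_le_div_of_nonneg_left hx0.le (by positivity)
        nlinarith
      have h2 : 0 ≤ h / M^2 := by positivity
      linarith
    have hcard : (S.ncard : ℝ) ≤ (x / M^2 + h / M^2) - x / (lam * M)^2 + 1 :=
      aux_count hAB hinj hbd
    have hfin : x / M^2 + h / M^2 - x / (lam * M)^2 ≤ 2000/999 * (lam - 1) * x / M^2 :=
      aux_final hx0 hM0 hlam1 hhC
    rw [hMrp, hc]
    have heq : 2000/999 * (lam - 1) * x * (M^2)⁻¹ = 2000/999 * (lam - 1) * x / M^2 := by ring
    rw [heq]
    linarith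
end

section
/- Let x ≥ e^{41}, 1000 ≤ h ≤ 2·x^{1/3}, let λ ∈ (1, 1.2], let m ≥ 1.5, and let M be a real with m·h = H ≤ M ≤ √(2x). If a, b are integers with 0 < a < b and u, u + a, u + b are all elements of S(M), then b ≥ 1.3860·x^{-1/3}·M^{4/3}. -/
section aux

private lemma aux_M (m h H M : ℝ) (hm : 1.5 ≤ m) (hh : 1000 ≤ h) (hH : m*h = H)
    (hHM : H ≤ M) : 1500 ≤ M ∧ 1.5*h ≤ M := by constructor <;> nlinarith

private lemma aux_sqrt (x M : ℝ) (hx : 0 ≤ 2*x) (hM : M ≤ Real.sqrt (2*x)) (hM0 : 0 ≤ M) :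
    M^2 ≤ 2*x := by nlinarith [Real.sq_sqrt hx, Real.sqrt_nonneg (2*x)]

private lemma aux_pair (M s t : ℝ) (hM : 0 < M) (hs : M < s) (ht : M < t) : M^2 ≤ s*t := by
  nlinarith

private lemma aux_dM (d h M t : ℝ) (h1 : d*t^2 ≤ h) (h2 : M^2 ≤ t^2) (h3 : 0 ≤ d) :
    d*M^2 ≤ h := by nlinarith

private lemma aux_posdiv (r P : ℝ) (h : 0 < r*P) (hP : 0 < P) : 0 < r := by nlinarith

private lemma aux_Bd1 (B d M h : ℝ) (hB : B < 0.2*M) (hB0 : 0 < B) (hd : d*M^2 ≤ h)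
    (hd0 : 0 < d) (hMh : 1.5*h ≤ M) (hh : 0 < h) (hM : 0 < M) : B*d < 1 := by
  have h1 : B*(d*M^2) ≤ B*h := mul_le_mul_of_nonneg_left hd hB0.le
  have h2 : B*h ≤ (0.2*M)*h := mul_le_mul_of_nonneg_right hB.le hh.le
  have h3 : (0.2*M)*h ≤ (0.2*M)*(M*(2/3)) := mul_le_mul_of_nonneg_left (by linarith) (by linarith)
  have h4 : (B*d)*M^2 ≤ (2/15)*M^2 := by nlinarith [h1, h2, h3]
  have h5 : B*d ≤ 2/15 := le_of_mul_le_mul_right h4 (by positivity)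
  linarith

private lemma aux_43 (x h M X : ℝ) (hx3 : X^3 = x) (hX : 700000 ≤ X) (hh0 : 0 < h)
    (hh2 : h ≤ 2*X) (hM0 : 0 < M) (hM2 : M^2 ≤ 2*x) : 1.44*h*M < 4*x := by
  have hX0 : (0:ℝ) < X := by linarith
  have w1 : h^2 ≤ 4*X^2 := by nlinarith
  have w2 : M^2 ≤ 2*X^3 := by nlinarith
  have s1 : (1.44*h*M)^2 ≤ 16.5888*X^5 := by
    nlinarith [mul_le_mul w1 w2 (sq_nonneg M) (by positivity)]
  have s2 : 16.5888*X^5 < 16*X^6 := by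
    nlinarith [pow_pos hX0 5, mul_nonneg (sub_nonneg.mpr hX) (pow_pos hX0 5).le]
  have s3 : (1.44*h*M)^2 < (4*x)^2 := by
    have e : (4*x)^2 = 16*X^6 := by rw [← hx3]; ring
    linarith
  have hx0 : (0:ℝ) < x := hx3 ▸ pow_pos hX0 3
  have := (pow_lt_pow_iff_left₀
    (mul_nonneg (mul_nonneg (by norm_num) hh0.le) hM0.le)
    (by linarith : (0:ℝ) ≤ 4*x) two_ne_zero).mp s3
  exact this

private lemma aux_sqle (t M : ℝ) (h : t ≤ 1.2*M) (ht : 0 < t) : t^2 ≤ 1.44*M^2 := by nlinarith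

private lemma aux_d4 (d h M t s : ℝ) (h1 : d*t^2 ≤ h) (h2 : s^2 ≤ 1.44*M^2) (hd : 0 ≤ d)
    (hh : 0 ≤ h) : d*(s*t)^2 ≤ 1.44*h*M^2 := by
  have g1 : (d*t^2)*s^2 ≤ h*s^2 := mul_le_mul_of_nonneg_right h1 (sq_nonneg s)
  have g2 : h*s^2 ≤ h*(1.44*M^2) := mul_le_mul_of_nonneg_left h2 hh
  nlinarith

private lemma aux5 (x A t0 M : ℝ) (hx0 : 0 < x) (hA2 : 2 ≤ A) (hMt : M < t0) (hM0 : 0 < M) :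
    x*(2*(2*M)) ≤ x*A*(t0+A+t0) := by
  have inner : 2*(2*M) ≤ A*(t0+A+t0) := by
    nlinarith [mul_nonneg (sub_nonneg.mpr hA2) (show (0:ℝ) ≤ 2*t0 by linarith),
      mul_nonneg (sub_nonneg.mpr hA2) (show (0:ℝ) ≤ A+2 by linarith)]
  nlinarith [mul_le_mul_of_nonneg_left inner hx0.le]

private lemma aux6 (x A t0 M : ℝ) (hx0 : 0 < x) (hA0 : 0 ≤ A) (hsum : t0+A+t0 ≤ 2.4*M) :
    x*((t0+A)-t0)*((t0+A)+t0) ≤ x*A*(2.4*M) := by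
  have g := mul_le_mul_of_nonneg_left hsum (mul_nonneg hx0.le hA0)
  nlinarith [g]

private lemma aux7 (M s : ℝ) (h : M^2 ≤ s) : M^4 ≤ s^2 := by nlinarith [sq_nonneg M]

private lemma aux8a (h M : ℝ) (hMh : 1.5*h ≤ M) (hM : 0 ≤ M) (hh : 0 ≤ h) :
    1.44*h*M^2 ≤ 0.96*M^3 := by nlinarith

private lemma aux8b (h M : ℝ) (hMh : 1.5*h ≤ M) (hM : 0 ≤ M) (hh : 0 ≤ h) :
    2.985984*(h*M^2) ≤ 1.990656*M^3 := by nlinarith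

private lemma aux9 (x A M : ℝ) (h : M^4 - 0.96*M^3 ≤ 2.4*(x*A)*M) (hM : 1500 ≤ M) :
    0.4164*M^3 ≤ x*A := by
  have hM0 : (0:ℝ) < M := by linarith
  have h2 : (0.4164*M^3)*M ≤ (x*A)*M := by nlinarith [pow_pos hM0 3]
  exact le_of_mul_le_mul_right h2 hM0

private lemma aux10 (t0 t1 t2 M : ℝ) (h0 : t0 ≤ 1.2*M) (h1 : t1 ≤ 1.2*M) (h2 : t2 ≤ 1.2*M)
    (p0 : 0 < t0) (p1 : 0 < t1) (p2 : 0 < t2) : t0*t1*t2 ≤ 1.728*M^3 := by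
  have hM : (0:ℝ) < M := by linarith
  have g1 : t0*t1 ≤ (1.2*M)*(1.2*M) := mul_le_mul h0 h1 p1.le (by linarith)
  have g2 : (t0*t1)*t2 ≤ ((1.2*M)*(1.2*M))*(1.2*M) :=
    mul_le_mul g1 h2 p2.le (by positivity)
  nlinarith [g2]

private lemma aux11 (x A B S M : ℝ) (hx : 0 ≤ x) (hA : 0 ≤ A) (hB : 0 ≤ B)
    (hBA : 2 ≤ B - A) (hS : 3*M^2 ≤ S) (hM : 0 ≤ M^2) :
    6*(x*A*B)*M^2 ≤ x*A*B*(B-A)*S := by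
  have g : (2:ℝ)*(3*M^2) ≤ (B-A)*S := mul_le_mul hBA hS (by linarith) (by linarith)
  have hxAB : (0:ℝ) ≤ x*A*B := mul_nonneg (mul_nonneg hx hA) hB
  nlinarith [mul_le_mul_of_nonneg_left g hxAB]

private lemma auxq1 (A B : ℝ) : A*(B-A) ≤ B^2/4 := by nlinarith [sq_nonneg (2*A-B)]

private lemma aux12 (M p q : ℝ) (h1 : M^2 ≤ p) (h2 : M^2 ≤ q) : M^4 ≤ p*q := by
  nlinarith [sq_nonneg M, mul_le_mul h1 h2 (sq_nonneg M) (le_trans (sq_nonneg M) h1)]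

private lemma aux13 (h x X : ℝ) (hX3 : X^3 = x) (hX : 700000 ≤ X) (hh2 : h ≤ 2*X) :
    h ≤ (24/10^9)*x := by
  have hX0 : (0:ℝ) < X := by linarith
  nlinarith [mul_nonneg (mul_nonneg (sub_nonneg.mpr hX) (sub_nonneg.mpr hX)) hX0.le,
    mul_nonneg (sub_nonneg.mpr hX) hX0.le,
    mul_nonneg (mul_nonneg (sub_nonneg.mpr hX) hX0.le) hX0.le]

private lemma aux14 (h M : ℝ) (hMh : 1.5*h ≤ M) (hh : 0 ≤ h) : 2.25*h^2 ≤ M^2 := by nlinarith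

end aux


set_option maxHeartbeats 1600000 in
private lemma core (x h M X Y A B t0 t1 t2 d0 d1 d2 Dlt : ℝ) (K n0 n1 : ℤ)
    (hx0 : (0:ℝ) < x) (hh0 : (0:ℝ) < h) (hM1500 : (1500:ℝ) ≤ M) (hMh : 1.5*h ≤ M)
    (hM2x : M^2 ≤ 2*x)
    (hX3 : X^(3:ℕ) = x) (hX0 : (0:ℝ) < X) (hXbig : (700000:ℝ) ≤ X) (hh2 : h ≤ 2*X)
    (hY3 : Y^(3:ℕ) = M) (hY0 : (0:ℝ) < Y)
    (hA2 : (2:ℝ) ≤ A) (hBA2 : (2:ℝ) ≤ B - A)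
    (ht1e : t1 = t0 + A) (ht2e : t2 = t0 + B)
    (hMt0 : M < t0) (hMt1 : M < t1) (hMt2 : M < t2)
    (ht0u : t0 ≤ 1.2*M) (ht1u : t1 ≤ 1.2*M) (ht2u : t2 ≤ 1.2*M)
    (hd0pos : 0 < d0) (hd1pos : 0 < d1) (hd2pos : 0 < d2)
    (hd0le : d0 * t0^2 ≤ h) (hd1le : d1 * t1^2 ≤ h) (hd2le : d2 * t2^2 ≤ h)
    (hDdef : Dlt = (B-A)*(x/t0^2) - B*(x/t1^2) + A*(x/t2^2))
    (hKr : (K:ℝ) = Dlt + ((B-A)*d0 - B*d1 + A*d2))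
    (hKeven : ∃ j, K = 2*j)
    (hn01E : (n0:ℝ) - (n1:ℝ) = x/t0^2 + d0 - (x/t1^2 + d1)) :
    B ≥ 1.3860 * X⁻¹ * Y^4 := by
  have hM0 : (0:ℝ) < M := by linarith
  have hB4 : (4:ℝ) ≤ B := by linarith
  have hB0 : (0:ℝ) < B := by linarith
  have hA0 : (0:ℝ) < A := by linarith
  have ht0pos : (0:ℝ) < t0 := lt_trans hM0 hMt0
  have ht1pos : (0:ℝ) < t1 := lt_trans hM0 hMt1
  have ht2pos : (0:ℝ) < t2 := lt_trans hM0 hMt2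
  have hBlt : B < 0.2 * M := by
    have hq := ht2u; rw [ht2e] at hq; linarith only [hq, hMt0]
  have ht0sq : (0:ℝ) < t0^2 := by positivity
  have ht1sq : (0:ℝ) < t1^2 := by positivity
  have ht2sq : (0:ℝ) < t2^2 := by positivity
  have hDid : Dlt * (t0*t1*t2)^2 = x*A*B*(B-A)*(t0*t1+t0*t2+t1*t2) := by
    have e0 : x/t0^2*(t0*t1*t2)^2 = x*(t1^2*t2^2) := by field_simp
    have e1 : x/t1^2*(t0*t1*t2)^2 = x*(t0^2*t2^2) := by field_simp
    have e2 : x/t2^2*(t0*t1*t2)^2 = x*(t0^2*t1^2) := by field_simp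
    calc Dlt * (t0*t1*t2)^2
        = (B-A)*(x/t0^2*(t0*t1*t2)^2) - B*(x/t1^2*(t0*t1*t2)^2)
          + A*(x/t2^2*(t0*t1*t2)^2) := by rw [hDdef]; ring
      _ = (B-A)*(x*(t1^2*t2^2)) - B*(x*(t0^2*t2^2)) + A*(x*(t0^2*t1^2)) := by
          rw [e0, e1, e2]
      _ = x*A*B*(B-A)*(t0*t1+t0*t2+t1*t2) := by rw [ht1e, ht2e]; ring
  have hP2pos : (0:ℝ) < (t0*t1*t2)^2 := by positivity
  -- pair products
  have hp01 : M^2 ≤ t0*t1 := aux_pair M t0 t1 hM0 hMt0 hMt1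
  have hp02 : M^2 ≤ t0*t2 := aux_pair M t0 t2 hM0 hMt0 hMt2
  have hp12 : M^2 ≤ t1*t2 := aux_pair M t1 t2 hM0 hMt1 hMt2
  have hM2t0 : M^2 ≤ t0^2 := by have := aux_pair M t0 t0 hM0 hMt0 hMt0; linarith only [this]
  have hM2t1 : M^2 ≤ t1^2 := by have := aux_pair M t1 t1 hM0 hMt1 hMt1; linarith only [this]
  have hM2t2 : M^2 ≤ t2^2 := by have := aux_pair M t2 t2 hM0 hMt2 hMt2; linarith only [this]
  have hd0M : d0 * M^2 ≤ h := aux_dM d0 h M t0 hd0le hM2t0 hd0pos.le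
  have hd1M : d1 * M^2 ≤ h := aux_dM d1 h M t1 hd1le hM2t1 hd1pos.le
  have hd2M : d2 * M^2 ≤ h := aux_dM d2 h M t2 hd2le hM2t2 hd2pos.le
  have hσpos : (0:ℝ) < t0*t1+t0*t2+t1*t2 := by
    linarith only [pow_pos hM0 2, hp01, hp02, hp12]
  have hDpos : 0 < Dlt := by
    have hR : (0:ℝ) < x*A*B*(B-A)*(t0*t1+t0*t2+t1*t2) :=
      mul_pos (mul_pos (mul_pos (mul_pos hx0 hA0) hB0) (by linarith)) hσpos
    have hq : (0:ℝ) < Dlt*(t0*t1*t2)^2 := by rw [hDid]; exact hR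
    exact aux_posdiv _ _ hq hP2pos
  -- K ≥ 0
  have hKge : 0 ≤ K := by
    have hBd1 : B * d1 < 1 := aux_Bd1 B d1 M h hBlt hB0 hd1M hd1pos hMh hh0 hM0
    have hr : (-1:ℝ) < (K:ℝ) := by
      have w1 : (0:ℝ) ≤ (B-A)*d0 := mul_nonneg (by linarith) hd0pos.le
      have w2 : (0:ℝ) ≤ A*d2 := mul_nonneg (by linarith) hd2pos.le
      linarith only [hKr, w1, w2, hBd1, hDpos]
    have : (-1:ℤ) < K := by exact_mod_cast hr
    omega
  have hKcase : K = 0 ∨ 2 ≤ K := by obtain ⟨j, hj⟩ := hKeven; omega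
  rcases hKcase with hK0 | hK2
  · -- collinear case: impossible
    exfalso
    have hE : ((n0:ℝ) - (n1:ℝ))*(t0*t1)^2 = x*(t1-t0)*(t1+t0) + (d0-d1)*(t0*t1)^2 := by
      rw [hn01E]; field_simp; ring
    have hhMx : 1.44*h*M < 4*x := aux_43 x h M X hX3 hXbig hh0 hh2 hM0 hM2x
    have ht0sq' : t0^2 ≤ 1.44*M^2 := aux_sqle t0 M ht0u ht0pos
    have ht1sq' : t1^2 ≤ 1.44*M^2 := aux_sqle t1 M ht1u ht1pos
    have hd1t01 : d1*(t0*t1)^2 ≤ 1.44*h*M^2 := by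
      have := aux_d4 d1 h M t1 t0 hd1le ht0sq' hd1pos.le hh0.le
      linarith only [this]
    have hd0t01 : d0*(t0*t1)^2 ≤ 1.44*h*M^2 := by
      have := aux_d4 d0 h M t0 t1 hd0le ht1sq' hd0pos.le hh0.le
      linarith only [this]
    have b1 : x*(2*(2*M)) ≤ x*(t1-t0)*(t1+t0) := by
      rw [ht1e]
      have := aux5 x A t0 M hx0 hA2 hMt0 hM0
      linarith only [this]
    have hn01pos : (0:ℤ) < n0 - n1 := by
      have hhMxM : 1.44*h*M*M < 4*x*M := mul_lt_mul_of_pos_right hhMx hM0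
      have key : (0:ℝ) < ((n0:ℝ) - (n1:ℝ))*(t0*t1)^2 := by
        rw [hE]
        have w1 : (0:ℝ) ≤ d0*(t0*t1)^2 := mul_nonneg hd0pos.le (sq_nonneg _)
        linarith only [b1, hd1t01, w1, hhMxM]
      have hr : (0:ℝ) < (n0:ℝ) - (n1:ℝ) :=
        aux_posdiv _ _ key (pow_pos (mul_pos ht0pos ht1pos) 2)
      have : (0:ℝ) < ((n0 - n1 : ℤ):ℝ) := by push_cast; linarith
      exact_mod_cast this
    have hn01 : (1:ℝ) ≤ (n0:ℝ) - (n1:ℝ) := by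
      have h1' : (1:ℤ) ≤ n0 - n1 := hn01pos
      have h2' : (1:ℝ) ≤ ((n0 - n1:ℤ):ℝ) := by exact_mod_cast h1'
      push_cast at h2'; linarith
    -- lower bound for x*A
    have hP1 : 0.4164*M^3 ≤ x*A := by
      have e1 : (t0*t1)^2 ≤ ((n0:ℝ) - (n1:ℝ))*(t0*t1)^2 := by
        have := mul_le_mul_of_nonneg_right hn01 (sq_nonneg (t0*t1))
        linarith only [this]
      have e2 : x*(t1-t0)*(t1+t0) ≤ x*A*(2.4*M) := by
        have hs : t0+A+t0 ≤ 2.4*M := by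
          have hq := ht1u; rw [ht1e] at hq; linarith
        rw [ht1e]
        exact aux6 x A t0 M hx0 hA0.le hs
      have e3 : M^4 ≤ (t0*t1)^2 := aux7 M (t0*t1) hp01
      have w1 : (0:ℝ) ≤ d1*(t0*t1)^2 := mul_nonneg hd1pos.le (sq_nonneg _)
      have e4 : M^4 ≤ x*A*(2.4*M) + 1.44*h*M^2 := by linarith only [hE, e1, e2, e3, hd0t01, w1]
      have e5 : 1.44*h*M^2 ≤ 0.96*M^3 := aux8a h M hMh hM0.le hh0.le
      exact aux9 x A M (by linarith) hM1500
    -- upper bound for x*A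
    have hK0r : ((K:ℤ):ℝ) = 0 := by rw [hK0]; norm_num
    have hDle : Dlt ≤ B*d1 := by
      have w1 : (0:ℝ) ≤ (B-A)*d0 := mul_nonneg (by linarith) hd0pos.le
      have w2 : (0:ℝ) ≤ A*d2 := mul_nonneg (by linarith) hd2pos.le
      linarith only [hKr, hK0r, w1, w2]
    have hDt1 : Dlt*t1^2 ≤ B*h := by
      have g1 : Dlt*t1^2 ≤ (B*d1)*t1^2 := mul_le_mul_of_nonneg_right hDle ht1sq.le
      have g2 : B*(d1*t1^2) ≤ B*h := mul_le_mul_of_nonneg_left hd1le hB0.le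
      linarith only [g1, g2]
    have hsig : 3*M^2 ≤ t0*t1+t0*t2+t1*t2 := by linarith only [hp01, hp02, hp12]
    have hprod : t0*t1*t2 ≤ 1.728*M^3 :=
      aux10 t0 t1 t2 M ht0u ht1u ht2u ht0pos ht1pos ht2pos
    have hP2up : (t0*t1*t2)^2 ≤ (1.728*M^3)^2 :=
      pow_le_pow_left₀ (by positivity) hprod 2
    have hlow : 6*(x*A*B)*M^2 ≤ Dlt*(t0*t1*t2)^2 := by
      rw [hDid]
      exact aux11 x A B (t0*t1+t0*t2+t1*t2) M hx0.le hA0.le hB0.le hBA2 hsig (sq_nonneg M)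
    have hxA2 : 6*x*A ≤ 2.985984*(h*M^2) := by
      have c1 : (6*(x*A*B)*M^2)*t1^2 ≤ (Dlt*(t0*t1*t2)^2)*t1^2 :=
        mul_le_mul_of_nonneg_right hlow ht1sq.le
      have c2 : (Dlt*t1^2)*(t0*t1*t2)^2 ≤ (B*h)*(t0*t1*t2)^2 :=
        mul_le_mul_of_nonneg_right hDt1 hP2pos.le
      have c3 : (B*h)*(t0*t1*t2)^2 ≤ (B*h)*((1.728*M^3)^2) :=
        mul_le_mul_of_nonneg_left hP2up (mul_nonneg hB0.le hh0.le)
      have hc6 : (0:ℝ) ≤ 6*(x*A*B)*M^2 :=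
        mul_nonneg (mul_nonneg (by norm_num) (mul_nonneg (mul_nonneg hx0.le hA0.le) hB0.le))
          (sq_nonneg M)
      have c4 : (6*(x*A*B)*M^2)*M^2 ≤ (6*(x*A*B)*M^2)*t1^2 :=
        mul_le_mul_of_nonneg_left hM2t1 hc6
      have c5 : (6*x*A)*(B*M^4) ≤ (2.985984*(h*M^2))*(B*M^4) := by linarith only [c1, c2, c3, c4]
      have hQ : (0:ℝ) < B*M^4 := mul_pos hB0 (pow_pos hM0 4)
      exact le_of_mul_le_mul_right c5 hQ
    have hfin : 2.985984*(h*M^2) ≤ 1.990656*M^3 := aux8b h M hMh hM0.le hh0.le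
    have hM3 : (0:ℝ) < M^3 := pow_pos hM0 3
    linarith only [hP1, hxA2, hfin, hM3]
  · -- main case
    by_contra hcon
    push_neg at hcon
    have hK2r : (2:ℝ) ≤ (K:ℝ) := by exact_mod_cast hK2
    have hKrM : (K:ℝ)*M^2 = (Dlt + ((B-A)*d0 - B*d1 + A*d2))*M^2 := by rw [hKr]
    have hDlow : 2*M^2 - B*h ≤ Dlt*M^2 := by
      have e1 : (B-A)*(d0*M^2) ≤ (B-A)*h := mul_le_mul_of_nonneg_left hd0M (by linarith)
      have e2 : A*(d2*M^2) ≤ A*h := mul_le_mul_of_nonneg_left hd2M (by linarith)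
      have e3 : (0:ℝ) ≤ B*(d1*M^2) := mul_nonneg hB0.le
        (mul_nonneg hd1pos.le (sq_nonneg M))
      have e4 : 2*M^2 ≤ (K:ℝ)*M^2 := mul_le_mul_of_nonneg_right hK2r (sq_nonneg M)
      linarith only [hKrM, e1, e2, e3, e4]
    have q1 : A*(B-A) ≤ B^2/4 := auxq1 A B
    have m4a : M^4 ≤ (t0*t1)*(t2^2) := aux12 M (t0*t1) (t2^2) hp01 hM2t2
    have m4b : M^4 ≤ (t0*t2)*(t1^2) := aux12 M (t0*t2) (t1^2) hp02 hM2t1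
    have m4c : M^4 ≤ (t1*t2)*(t0^2) := aux12 M (t1*t2) (t0^2) hp12 hM2t0
    have q2 : (t0*t1+t0*t2+t1*t2)*M^4 ≤ 3*(t0*t1*t2)^2 := by
      have f1 : (t0*t1)*M^4 ≤ (t0*t1)*((t0*t1)*t2^2) :=
        mul_le_mul_of_nonneg_left (by linarith [m4a]) (by linarith only [hp01, pow_pos hM0 2])
      have f2 : (t0*t2)*M^4 ≤ (t0*t2)*((t0*t2)*t1^2) :=
        mul_le_mul_of_nonneg_left (by linarith [m4b]) (by linarith only [hp02, pow_pos hM0 2])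
      have f3 : (t1*t2)*M^4 ≤ (t1*t2)*((t1*t2)*t0^2) :=
        mul_le_mul_of_nonneg_left (by linarith [m4c]) (by linarith only [hp12, pow_pos hM0 2])
      linarith only [f1, f2, f3]
    have hDup : Dlt*M^4 ≤ (3/4)*x*B^3 := by
      have e : Dlt*M^4*(t0*t1*t2)^2 = (x*B)*((A*(B-A))*((t0*t1+t0*t2+t1*t2)*M^4)) := by
        rw [show Dlt*M^4*(t0*t1*t2)^2 = Dlt*(t0*t1*t2)^2*M^4 from by ring, hDid]; ring
      have hσM : (0:ℝ) ≤ (t0*t1+t0*t2+t1*t2)*M^4 :=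
        mul_nonneg hσpos.le (by positivity)
      have g : (A*(B-A))*((t0*t1+t0*t2+t1*t2)*M^4) ≤ (B^2/4)*(3*(t0*t1*t2)^2) :=
        mul_le_mul q1 q2 hσM (by positivity)
      have g2 : (x*B)*((A*(B-A))*((t0*t1+t0*t2+t1*t2)*M^4))
          ≤ (x*B)*((B^2/4)*(3*(t0*t1*t2)^2)) :=
        mul_le_mul_of_nonneg_left g (mul_nonneg hx0.le hB0.le)
      have g3 : (Dlt*M^4)*(t0*t1*t2)^2 ≤ ((3/4)*x*B^3)*(t0*t1*t2)^2 := by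
        linarith only [e, g2]
      exact le_of_mul_le_mul_right g3 hP2pos
    have hkey : 2*M^4 - B*h*M^2 ≤ (3/4)*x*B^3 := by
      have step := mul_le_mul_of_nonneg_right hDlow (sq_nonneg M)
      linarith only [step, hDup]
    -- bound B*h
    have hXYnn : (0:ℝ) ≤ 0.00223*X*Y^2 :=
      mul_nonneg (mul_nonneg (by norm_num) hX0.le) (sq_nonneg Y)
    have hhb : h ≤ 0.00223*X*Y^2 := by
      have hhx : h ≤ (24/10^9)*x := aux13 h x X hX3 hXbig hh2
      have hM2h : 2.25*h^2 ≤ M^2 := aux14 h M hMh hh0.le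
      have hc : h^(3:ℕ) ≤ (0.00223*X*Y^2)^(3:ℕ) := by
        have hY6 : (Y^2)^(3:ℕ) = M^2 := by
          rw [show (Y^2)^(3:ℕ) = (Y^(3:ℕ))^2 from by ring, hY3]
        have erhs : (0.00223*X*Y^2)^(3:ℕ) = (11089567/10^15)*x*M^2 := by
          rw [show (0.00223*X*Y^2)^(3:ℕ) = (0.00223:ℝ)^3*(X^(3:ℕ))*((Y^2)^(3:ℕ)) from by
            ring, hX3, hY6]
          norm_num
        rw [erhs]
        have w1 : h^2 ≤ M^2*(4/9) := by linarith only [hM2h]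
        have w2 : h*h^2 ≤ ((24/10^9)*x)*(M^2*(4/9)) :=
          mul_le_mul hhx w1 (sq_nonneg h) (mul_nonneg (by norm_num) hx0.le)
        linarith only [w2, mul_pos hx0 (pow_pos hM0 2)]
      exact (pow_le_pow_iff_left₀ hh0.le hXYnn (by norm_num)).mp hc
    have hBX : B*X < 1.3860*Y^4 := by
      have hq := mul_lt_mul_of_pos_right hcon hX0
      calc B*X < 1.3860 * X⁻¹ * Y^4 * X := hq
        _ = 1.3860*Y^4 := by field_simp
    have hBhM : B*h ≤ 0.0031*M^2 := by
      have g1 : B*h ≤ B*(0.00223*X*Y^2) := mul_le_mul_of_nonneg_left hhb hB0.le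
      have g2 : (B*X)*(0.00223*Y^2) ≤ (1.3860*Y^4)*(0.00223*Y^2) :=
        mul_le_mul_of_nonneg_right hBX.le (mul_nonneg (by norm_num) (sq_nonneg Y))
      have hY6 : Y^6 = M^2 := by rw [show (Y:ℝ)^6 = (Y^(3:ℕ))^2 from by ring, hY3]
      linarith only [g1, g2, hY6, pow_pos hM0 2]
    have hBXnn : (0:ℝ) ≤ B*X := mul_nonneg hB0.le hX0.le
    have hYnn : (0:ℝ) ≤ 1.3860*Y^4 := mul_nonneg (by norm_num) (by positivity)
    have hfin : (1.3860*Y^4)^(3:ℕ) ≤ (B*X)^(3:ℕ) := by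
      have hY12 : Y^12 = M^4 := by rw [show (Y:ℝ)^12 = (Y^(3:ℕ))^4 from by ring, hY3]
      have e1 : (B*X)^(3:ℕ) = B^3*x := by
        rw [show (B*X)^(3:ℕ) = B^3*(X^(3:ℕ)) from by ring, hX3]
      have e2 : (1.3860*Y^4)^(3:ℕ) = (332812557/125000000)*M^4 := by
        rw [show ((1.3860:ℝ)*Y^4)^(3:ℕ) = (1.3860:ℝ)^3*(Y^12) from by ring, hY12]; norm_num
      rw [e1, e2]
      have v1 : (B*h)*M^2 ≤ (0.0031*M^2)*M^2 := mul_le_mul_of_nonneg_right hBhM (sq_nonneg M)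
      linarith only [hkey, v1, pow_pos hM0 4]
    have hge := (pow_le_pow_iff_left₀ hYnn hBXnn (by norm_num : (3:ℕ) ≠ 0)).mp hfin
    linarith only [hBX, hge]

set_option maxHeartbeats 1000000 in
/-- Lemma 4 (spacing for triples). -/
theorem triple_spacing (x h lam m H M : ℝ) (u a b : ℤ)
    (hx : Real.exp 41 ≤ x) (hh1 : (1000 : ℝ) ≤ h) (hh2 : h ≤ 2 * x ^ ((1 : ℝ) / 3))
    (hlam1 : 1 < lam) (hlam2 : lam ≤ 1.2) (hm : (1.5 : ℝ) ≤ m)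
    (hH : m * h = H) (hHM : H ≤ M) (hM : M ≤ Real.sqrt (2 * x))
    (ha : 0 < a) (hab : a < b)
    (hu : u ∈ Sset x h M (lam * M)) (hua : u + a ∈ Sset x h M (lam * M))
    (hub : u + b ∈ Sset x h M (lam * M)) :
    (b : ℝ) ≥ 1.3860 * x ^ (-(1 : ℝ) / 3) * M ^ ((4 : ℝ) / 3) := by
  -- basic positivity
  have hx0 : (0:ℝ) < x := lt_of_lt_of_le (Real.exp_pos 41) hx
  have hh0 : (0:ℝ) < h := by linarith
  obtain ⟨hM1500, hMh⟩ := aux_M m h H M hm hh1 hH hHM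
  have hM0 : (0:ℝ) < M := by linarith
  have hM2x : M^2 ≤ 2*x := aux_sqrt x M (by linarith) hM hM0.le
  -- cube roots
  set X := x ^ ((1:ℝ)/3) with hXdef
  have hX0 : (0:ℝ) < X := Real.rpow_pos_of_pos hx0 _
  have hX3 : X^(3:ℕ) = x := by
    rw [hXdef, ← Real.rpow_natCast (x ^ ((1:ℝ)/3)) 3, ← Real.rpow_mul hx0.le]; norm_num
  have hXbig : (700000:ℝ) ≤ X := by
    have h1 : Real.exp 41 = (Real.exp 1)^(41:ℕ) := by rw [← Real.exp_nat_mul]; norm_num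
    have h2 : (2.7182818283:ℝ)^(41:ℕ) ≤ (Real.exp 1)^(41:ℕ) :=
      pow_le_pow_left₀ (by norm_num) (le_of_lt Real.exp_one_gt_d9) 41
    have h3 : ((700000:ℝ))^(3:ℕ) ≤ (2.7182818283:ℝ)^(41:ℕ) := by norm_num
    have h4 : ((700000:ℝ))^(3:ℕ) ≤ X^(3:ℕ) := by rw [hX3]; linarith
    exact (pow_le_pow_iff_left₀ (by norm_num) (le_of_lt hX0) (by norm_num)).mp h4
  set Y := M ^ ((1:ℝ)/3) with hYdef
  have hY0 : (0:ℝ) < Y := Real.rpow_pos_of_pos hM0 _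
  have hY3 : Y^(3:ℕ) = M := by
    rw [hYdef, ← Real.rpow_natCast (M ^ ((1:ℝ)/3)) 3, ← Real.rpow_mul hM0.le]; norm_num
  have htarget : 1.3860 * x ^ (-(1:ℝ)/3) * M ^ ((4:ℝ)/3) = 1.3860 * X⁻¹ * Y^4 := by
    congr 1
    · congr 1
      rw [show (-(1:ℝ)/3) = -(1/3) by norm_num, Real.rpow_neg hx0.le]
    · rw [hYdef, ← Real.rpow_natCast (M ^ ((1:ℝ)/3)) 4, ← Real.rpow_mul hM0.le]; norm_num
  -- unpack memberships
  simp only [Sset, Set.mem_setOf_eq] at hu hua hub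
  obtain ⟨hodd0, hMt0, ht0up', hf0a, hf0b⟩ := hu
  obtain ⟨hodd1, hMt1, ht1up', hf1a, hf1b⟩ := hua
  obtain ⟨hodd2, hMt2, ht2up', hf2a, hf2b⟩ := hub
  set t0 : ℝ := (u:ℝ) with ht0def
  set t1 : ℝ := ((u+a : ℤ):ℝ) with ht1def
  set t2 : ℝ := ((u+b : ℤ):ℝ) with ht2def
  set A : ℝ := (a:ℝ) with hAdef
  set B : ℝ := (b:ℝ) with hBdef
  have ht1e : t1 = t0 + A := by rw [ht1def, ht0def, hAdef]; push_cast; ring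
  have ht2e : t2 = t0 + B := by rw [ht2def, ht0def, hBdef]; push_cast; ring
  -- parity
  have hEa : Even a := by have h3 : Even (u + a - u) := Odd.sub_odd hodd1 hodd0; simpa using h3
  have hEb : Even b := by have h3 : Even (u + b - u) := Odd.sub_odd hodd2 hodd0; simpa using h3
  have hA2 : (2:ℝ) ≤ A := by
    have h2a : 2 ≤ a := by obtain ⟨p, hp⟩ := hEa; omega
    rw [hAdef]; exact_mod_cast h2a
  have hBA2 : (2:ℝ) ≤ B - A := by
    have h2ab : a + 2 ≤ b := by obtain ⟨p, hp⟩ := hEa; obtain ⟨q, hq⟩ := hEb; omega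
    have h2ab' : A + 2 ≤ B := by rw [hAdef, hBdef]; exact_mod_cast h2ab
    linarith
  have hB4 : (4:ℝ) ≤ B := by linarith
  have hB0 : (0:ℝ) < B := by linarith
  have hA0 : (0:ℝ) < A := by linarith
  -- geometry of the t's
  have hlamM : lam * M ≤ 1.2 * M := mul_le_mul_of_nonneg_right hlam2 hM0.le
  have ht0u : t0 ≤ 1.2 * M := le_trans ht0up' hlamM
  have ht1u : t1 ≤ 1.2 * M := le_trans ht1up' hlamM
  have ht2u : t2 ≤ 1.2 * M := le_trans ht2up' hlamM
  have ht0pos : (0:ℝ) < t0 := lt_trans hM0 hMt0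
  have ht1pos : (0:ℝ) < t1 := lt_trans hM0 hMt1
  have ht2pos : (0:ℝ) < t2 := lt_trans hM0 hMt2
  have hBlt : B < 0.2 * M := by
    have hq := ht2u; rw [ht2e] at hq; linarith only [hq, hMt0]
  -- fractional part data
  have hfr0 : Int.fract (x/t0^2) = x/t0^2 - ⌊x/t0^2⌋ := rfl
  have hfr1 : Int.fract (x/t1^2) = x/t1^2 - ⌊x/t1^2⌋ := rfl
  have hfr2 : Int.fract (x/t2^2) = x/t2^2 - ⌊x/t2^2⌋ := rfl
  set n0 : ℤ := ⌊x/t0^2⌋ + 1 with hn0def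
  set n1 : ℤ := ⌊x/t1^2⌋ + 1 with hn1def
  set n2 : ℤ := ⌊x/t2^2⌋ + 1 with hn2def
  set d0 : ℝ := (n0:ℝ) - x/t0^2 with hd0def
  set d1 : ℝ := (n1:ℝ) - x/t1^2 with hd1def
  set d2 : ℝ := (n2:ℝ) - x/t2^2 with hd2def
  have hn0 : (n0:ℝ) = x/t0^2 + d0 := by rw [hd0def]; ring
  have hn1 : (n1:ℝ) = x/t1^2 + d1 := by rw [hd1def]; ring
  have hn2 : (n2:ℝ) = x/t2^2 + d2 := by rw [hd2def]; ring
  have hd0pos : 0 < d0 := by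
    rw [hfr0] at hf0b; rw [hd0def, hn0def]; push_cast; linarith only [hf0b]
  have hd1pos : 0 < d1 := by
    rw [hfr1] at hf1b; rw [hd1def, hn1def]; push_cast; linarith only [hf1b]
  have hd2pos : 0 < d2 := by
    rw [hfr2] at hf2b; rw [hd2def, hn2def]; push_cast; linarith only [hf2b]
  have ht0sq : (0:ℝ) < t0^2 := by positivity
  have ht1sq : (0:ℝ) < t1^2 := by positivity
  have ht2sq : (0:ℝ) < t2^2 := by positivity
  have hd0le : d0 * t0^2 ≤ h := by
    rw [hfr0] at hf0a
    have hq : d0 ≤ h/t0^2 := by rw [hd0def, hn0def]; push_cast; linarith only [hf0a]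
    calc d0 * t0^2 ≤ (h/t0^2) * t0^2 := mul_le_mul_of_nonneg_right hq ht0sq.le
      _ = h := by field_simp
  have hd1le : d1 * t1^2 ≤ h := by
    rw [hfr1] at hf1a
    have hq : d1 ≤ h/t1^2 := by rw [hd1def, hn1def]; push_cast; linarith only [hf1a]
    calc d1 * t1^2 ≤ (h/t1^2) * t1^2 := mul_le_mul_of_nonneg_right hq ht1sq.le
      _ = h := by field_simp
  have hd2le : d2 * t2^2 ≤ h := by
    rw [hfr2] at hf2a
    have hq : d2 ≤ h/t2^2 := by rw [hd2def, hn2def]; push_cast; linarith only [hf2a]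
    calc d2 * t2^2 ≤ (h/t2^2) * t2^2 := mul_le_mul_of_nonneg_right hq ht2sq.le
      _ = h := by field_simp
  -- the second difference
  set Dlt : ℝ := (B-A)*(x/t0^2) - B*(x/t1^2) + A*(x/t2^2) with hDdef
  set K : ℤ := (b-a)*n0 - b*n1 + a*n2 with hKdef
  have hKr : (K:ℝ) = Dlt + ((B-A)*d0 - B*d1 + A*d2) := by
    rw [hKdef, hDdef]; push_cast; rw [hn0, hn1, hn2, ← hAdef, ← hBdef]; ring
  have hKeven : ∃ j, K = 2*j := by
    obtain ⟨p, hp⟩ := hEa; obtain ⟨q, hq⟩ := hEb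
    exact ⟨(q-p)*n0 - q*n1 + p*n2, by rw [hKdef, hp, hq]; ring⟩
  have hDid : Dlt * (t0*t1*t2)^2 = x*A*B*(B-A)*(t0*t1+t0*t2+t1*t2) := by
    have e0 : x/t0^2*(t0*t1*t2)^2 = x*(t1^2*t2^2) := by field_simp
    have e1 : x/t1^2*(t0*t1*t2)^2 = x*(t0^2*t2^2) := by field_simp
    have e2 : x/t2^2*(t0*t1*t2)^2 = x*(t0^2*t1^2) := by field_simp
    calc Dlt * (t0*t1*t2)^2
        = (B-A)*(x/t0^2*(t0*t1*t2)^2) - B*(x/t1^2*(t0*t1*t2)^2)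
          + A*(x/t2^2*(t0*t1*t2)^2) := by rw [hDdef]; ring
      _ = (B-A)*(x*(t1^2*t2^2)) - B*(x*(t0^2*t2^2)) + A*(x*(t0^2*t1^2)) := by
          rw [e0, e1, e2]
      _ = x*A*B*(B-A)*(t0*t1+t0*t2+t1*t2) := by rw [ht1e, ht2e]; ring
  have hP2pos : (0:ℝ) < (t0*t1*t2)^2 := by positivity
  rw [ge_iff_le, htarget, ← ge_iff_le]
  have hn01E : (n0:ℝ) - (n1:ℝ) = x/t0^2 + d0 - (x/t1^2 + d1) := by rw [hn0, hn1]
  exact core x h M X Y A B t0 t1 t2 d0 d1 d2 Dlt K n0 n1 hx0 hh0 hM1500 hMh hM2x hX3 hX0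
    hXbig hh2 hY3 hY0 hA2 hBA2 ht1e ht2e hMt0 hMt1 hMt2 ht0u ht1u ht2u hd0pos hd1pos hd2pos
    hd0le hd1le hd2le hDdef hKr hKeven hn01E
end

section
/- Let x ≥ e^{41}, 1000 ≤ h ≤ 2·x^{1/3}, let λ ∈ (1, 1.2], let m ≥ 1.5, and let M be a real with m·h = H ≤ M ≤ √(2x). Then |S(M)| ≤ 1.4430·(λ − 1)·x^{1/3}·M^{-1/3} + 2. -/
set_option maxHeartbeats 2000000 in
/-- Corollary 3: bound on the cardinality of `S(M)` via triple spacing. -/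
theorem card_Sset_triple (x h lam m H M : ℝ)
    (hx : Real.exp 41 ≤ x) (hh1 : (1000 : ℝ) ≤ h) (hh2 : h ≤ 2 * x ^ ((1 : ℝ) / 3))
    (hlam1 : 1 < lam) (hlam2 : lam ≤ 1.2) (hm : (1.5 : ℝ) ≤ m)
    (hH : m * h = H) (hHM : H ≤ M) (hM : M ≤ Real.sqrt (2 * x)) :
    ((Sset x h M (lam * M)).ncard : ℝ) ≤
      1.4430 * (lam - 1) * x ^ ((1 : ℝ) / 3) * M ^ (-(1 : ℝ) / 3) + 2 := by
  classical
  have hx0 : (0:ℝ) < x := lt_of_lt_of_le (Real.exp_pos 41) hx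
  have hh0 : (0:ℝ) < h := by linarith
  have h15 : 1.5 * h ≤ M := by nlinarith only [hm, hh0, hHM, hH]
  have hM1500 : (1500:ℝ) ≤ M := by nlinarith only [hm, hh1, hHM, hH]
  have hM0 : (0:ℝ) < M := by linarith only [hM1500]
  have hhM2 : 2250 * h ≤ M ^ 2 := by
    have h1 : (1500:ℝ) * (1.5 * h) ≤ M * M :=
      mul_le_mul hM1500 h15 (by linarith only [hh1]) (by linarith only [hM1500])
    linarith only [h1]
  set A := x ^ ((1:ℝ)/3) with hAdef
  set B := M ^ ((1:ℝ)/3) with hBdef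
  have hA0 : 0 < A := Real.rpow_pos_of_pos hx0 _
  have hB0 : 0 < B := Real.rpow_pos_of_pos hM0 _
  have hA3 : A ^ 3 = x := by
    rw [hAdef, ← Real.rpow_natCast (x ^ ((1:ℝ)/3)) 3, ← Real.rpow_mul hx0.le]
    norm_num
  have hB3 : B ^ 3 = M := by
    rw [hBdef, ← Real.rpow_natCast (M ^ ((1:ℝ)/3)) 3, ← Real.rpow_mul hM0.le]
    norm_num
  have hMx : M ^ 2 ≤ 2 * x := by
    have := (Real.le_sqrt hM0.le (by positivity)).mp hM
    linarith only [this]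
  have hexp41 : (1.8e13 : ℝ) ≤ Real.exp 41 := by
    have h1 : (2.7182818283 : ℝ) ≤ Real.exp 1 := Real.exp_one_gt_d9.le
    have h2 : ((2.7182818283:ℝ))^(41:ℕ) ≤ (Real.exp 1)^(41:ℕ) :=
      pow_le_pow_left₀ (by norm_num) h1 41
    have h3 : (Real.exp 1)^(41:ℕ) = Real.exp 41 := by
      rw [Real.exp_one_pow]; norm_num
    have h4 : (1.8e13:ℝ) ≤ ((2.7182818283:ℝ))^(41:ℕ) := by norm_num
    linarith only [h2, h3, h4]
  have hx13 : (1.8e13 : ℝ) ≤ x := le_trans hexp41 hx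
  have hAB : (300000:ℝ) ≤ A * B := by
    by_contra hc
    push_neg at hc
    have h1 : (A*B)^3 < 300000^3 := by
      apply pow_lt_pow_left₀ hc (by positivity)
      norm_num
    have h2 : (A*B)^3 = x * M := by rw [mul_pow, hA3, hB3]
    have hxM : (1.8e13:ℝ) * 1500 ≤ x * M :=
      mul_le_mul hx13 hM1500 (by norm_num) (by linarith only [hx13])
    rw [h2] at h1
    norm_num at h1
    linarith only [h1, hxM]
  have hA2b : (2:ℝ) ≤ A := by
    by_contra hc
    push_neg at hc
    have h1 : A^3 < 2^3 := by
      apply pow_lt_pow_left₀ hc hA0.le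
      norm_num
    rw [hA3] at h1
    norm_num at h1
    linarith only [h1, hx13]
  -- the gap threshold
  set l : ℝ := (2/1.4430) * B^4 / A with hl
  have hl0 : (0:ℝ) < l := by positivity
  have hB12 : B^12 = M^4 := by rw [← hB3]; ring
  have hxl3 : x * l^3 = (2/1.4430)^3 * M^4 := by
    have h1 : l^3 * A^3 = (2/1.4430)^3 * B^12 := by
      rw [hl]; field_simp
    rw [← hA3, ← hB12]; linarith only [h1]
  -- smallness of h * l
  have hll : h * l ≤ 0.00294 * M^2 := by
    have h2b : h * (1.5 * h) ≤ (2*A) * M :=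
      mul_le_mul hh2 h15 (by linarith only [hh1]) (by positivity)
    have step3 : h^2 ≤ (4/3) * A * B^3 := by rw [hB3]; linarith only [h2b]
    have step1 : l^2 * A^2 = (2/1.4430)^2 * B^8 := by
      rw [hl]; field_simp
    have step2 : (h*l)^2 * A^2 = h^2 * ((2/1.4430)^2 * B^8) := by
      linear_combination h^2 * step1
    have step4 : (h*l)^2 * A^2 ≤ ((4/3) * A * B^3) * ((2/1.4430)^2 * B^8) := by
      rw [step2]
      exact mul_le_mul_of_nonneg_right step3 (by positivity)
    have g3 : ((A*B^11) * 300000) ≤ ((A*B^11) * (A*B)) :=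
      mul_le_mul_of_nonneg_left hAB (by positivity)
    have g4 : ((4/3) * A * B^3) * ((2/1.4430)^2 * B^8)
        = ((4/3)*(2/1.4430)^2) * (A*B^11) := by ring
    have g5 : ((4/3)*(2/1.4430)^2) * (A*B^11) ≤ (0.0000086436 * 300000) * (A*B^11) := by
      have hbase : ((4/3)*(2/1.4430)^2 : ℝ) ≤ 0.0000086436 * 300000 := by norm_num
      exact mul_le_mul_of_nonneg_right hbase (by positivity)
    have g6 : (0.0000086436 * 300000) * (A*B^11) ≤ 0.0000086436 * ((A*B^11)*(A*B)) := by
      have := mul_le_mul_of_nonneg_left g3 (show (0:ℝ) ≤ 0.0000086436 by norm_num)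
      linarith only [this]
    have g7 : (0.0000086436:ℝ) * ((A*B^11)*(A*B)) = (0.00294*M^2)^2 * A^2 := by
      have he : (0.0000086436:ℝ) = 0.00294^2 := by norm_num
      have hM2B : M^2 = B^6 := by rw [← hB3]; ring
      rw [he, hM2B]; ring
    have step6 : (h*l)^2 ≤ (0.00294*M^2)^2 := by
      have chain : (h*l)^2 * A^2 ≤ (0.00294*M^2)^2 * A^2 := by
        calc (h*l)^2 * A^2 ≤ ((4/3) * A * B^3) * ((2/1.4430)^2 * B^8) := step4
          _ = ((4/3)*(2/1.4430)^2) * (A*B^11) := g4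
          _ ≤ (0.0000086436 * 300000) * (A*B^11) := g5
          _ ≤ 0.0000086436 * ((A*B^11)*(A*B)) := g6
          _ = (0.00294*M^2)^2 * A^2 := g7
      exact le_of_mul_le_mul_right chain (by positivity)
    exact le_of_pow_le_pow_left₀ (by norm_num) (by positivity) step6
  -- the set and membership facts
  set S : Set ℤ := Sset x h M (lam * M) with hS
  set n : ℤ → ℤ := fun t => ⌊x / (t:ℝ)^2⌋ + 1 with hn
  set dl : ℤ → ℝ := fun t => ((n t : ℤ) : ℝ) - x / (t:ℝ)^2 with hdl
  have hmem : ∀ t : ℤ, t ∈ S → Odd t ∧ M < (t:ℝ) ∧ (t:ℝ) ≤ lam * M ∧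
      0 < dl t ∧ dl t ≤ h / (t:ℝ)^2 := by
    intro t ht
    rw [hS] at ht
    simp only [Sset, Set.mem_setOf_eq] at ht
    obtain ⟨hodd, h1, h2, h3, h4⟩ := ht
    have hfr : dl t = 1 - Int.fract (x / (t:ℝ)^2) := by
      simp only [hdl, hn]
      have hq : Int.fract (x / (t:ℝ)^2) = x / (t:ℝ)^2 - ⌊x / (t:ℝ)^2⌋ := rfl
      rw [hq]; push_cast; ring
    exact ⟨hodd, h1, h2, by rw [hfr]; linarith only [h4],
      by rw [hfr]; linarith only [h3]⟩
  have hnd : ∀ t : ℤ, ((n t : ℤ) : ℝ) = x / (t:ℝ)^2 + dl t := by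
    intro t; rw [hdl]; ring
  clear_value n dl
  -- the pair lemma
  have pair : ∀ a b : ℤ, a ∈ S → b ∈ S → a < b →
      (1 ≤ n a - n b) ∧
      (((n a : ℤ):ℝ) - ((n b : ℤ):ℝ)) * M^3 ≤ 2*lam*x*((b:ℝ) - (a:ℝ)) + h*M := by
    intro a b ha hb hab
    obtain ⟨haodd, ha1, ha2, ha3, ha4⟩ := hmem a ha
    obtain ⟨hbodd, hb1, hb2, hb3, hb4⟩ := hmem b hb
    have hA1 : (0:ℝ) < (a:ℝ) := lt_trans hM0 ha1
    have hB1 : (0:ℝ) < (b:ℝ) := lt_trans hM0 hb1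
    have hgap : (2:ℝ) ≤ (b:ℝ) - (a:ℝ) := by
      have hev : Even (b - a) := hbodd.sub_odd haodd
      obtain ⟨r, hr⟩ := hev
      have h2 : (2:ℤ) ≤ b - a := by omega
      have h2c : (2:ℝ) ≤ ((b - a : ℤ):ℝ) := by exact_mod_cast h2
      push_cast at h2c
      linarith only [h2c]
    have hMa2 : M^2 ≤ (a:ℝ)^2 := by
      have := mul_self_le_mul_self hM0.le ha1.le
      linarith only [this]
    have hMb2 : M^2 ≤ (b:ℝ)^2 := by
      have := mul_self_le_mul_self hM0.le hb1.le
      linarith only [this]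
    have halam : (a:ℝ)^2 ≤ lam^2 * M^2 := by
      have := mul_self_le_mul_self hA1.le ha2
      linarith only [this]
    have hdab : h / (a:ℝ)^2 ≤ h / M^2 :=
      div_le_div_of_nonneg_left hh0.le (by positivity) hMa2
    have hdbb : h / (b:ℝ)^2 ≤ h / M^2 :=
      div_le_div_of_nonneg_left hh0.le (by positivity) hMb2
    -- s1 : h * lam^2 * M < 4 * x
    have e0a : h^2 ≤ 4*A^2 := by
      have := mul_self_le_mul_self hh0.le hh2
      linarith only [this]
    have e0b : lam^4 ≤ 2.0736 := by
      have h0 : (0:ℝ) ≤ lam := by linarith only [hlam1]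
      have hp := pow_le_pow_left₀ h0 hlam2 4
      norm_num at hp
      linarith only [hp]
    have hMA : M^2 ≤ 2 * A^3 := by rw [hA3]; exact hMx
    have s1 : h * lam^2 * M < 4 * x := by
      have q1 : h^2 * lam^4 ≤ (4*A^2) * 2.0736 :=
        mul_le_mul e0a e0b (by positivity) (by positivity)
      have q2 : (h*lam^2*M)^2 ≤ ((4*A^2) * 2.0736) * M^2 := by
        have := mul_le_mul_of_nonneg_right q1 (sq_nonneg M)
        linarith only [this]
      have q3 : (h*lam^2*M)^2 ≤ 16.5888 * A^5 := by
        have := mul_le_mul_of_nonneg_left hMA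
          (show (0:ℝ) ≤ (4*A^2) * 2.0736 by positivity)
        linarith only [this, q2]
      by_contra hc
      push_neg at hc
      have h4x : (0:ℝ) ≤ 4 * x := by positivity
      have hsq := mul_self_le_mul_self h4x hc
      rw [← hA3] at hsq
      have hx6 : 16 * A^6 ≤ 16.5888 * A^5 := by linarith only [hsq, q3]
      have hfin : 16 * A ≤ 16.5888 := by
        refine le_of_mul_le_mul_right ?_ (show (0:ℝ) < A^5 by positivity)
        linarith only [hx6]
      linarith only [hfin, hA2b]
    -- positivity of n a - n b
    have d1 : 0 < x / (a:ℝ)^2 - x / (b:ℝ)^2 - h / (b:ℝ)^2 := by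
      have exp2 : x / (a:ℝ)^2 - x / (b:ℝ)^2 - h / (b:ℝ)^2
          = (x * ((b:ℝ)^2 - (a:ℝ)^2) - h * (a:ℝ)^2) / ((a:ℝ)^2 * (b:ℝ)^2) := by
        field_simp
      rw [exp2]
      apply div_pos _ (by positivity)
      have hbb1 : 2*((a:ℝ)+(b:ℝ)) ≤ ((b:ℝ)-(a:ℝ))*((a:ℝ)+(b:ℝ)) :=
        mul_le_mul_of_nonneg_right hgap (by linarith only [hA1, hB1])
      have hbb : 4 * M ≤ ((b:ℝ) - (a:ℝ)) * ((a:ℝ) + (b:ℝ)) := by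
        linarith only [hbb1, ha1, hb1]
      have w1 : x*(4*M) ≤ x*(((b:ℝ) - (a:ℝ)) * ((a:ℝ) + (b:ℝ))) :=
        mul_le_mul_of_nonneg_left hbb hx0.le
      have w2 : h*(a:ℝ)^2 ≤ h*(lam^2*M^2) := mul_le_mul_of_nonneg_left halam hh0.le
      have w3 : h*lam^2*M*M < 4*x*M := mul_lt_mul_of_pos_right s1 hM0
      nlinarith only [w1, w2, w3]
    have p1 : 1 ≤ n a - n b := by
      have p1real : (0:ℝ) < ((n a : ℤ):ℝ) - ((n b : ℤ):ℝ) := by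
        rw [hnd a, hnd b]
        linarith only [d1, ha3, hb4]
      have hc2 : (0:ℝ) < ((n a - n b : ℤ):ℝ) := by push_cast; linarith only [p1real]
      have hc3 : (0:ℤ) < n a - n b := by exact_mod_cast hc2
      omega
    refine ⟨p1, ?_⟩
    have e2 : (x / (a:ℝ)^2 - x / (b:ℝ)^2) * M^3 ≤ 2*lam*x*((b:ℝ) - (a:ℝ)) := by
      have expn : x / (a:ℝ)^2 - x / (b:ℝ)^2
          = x * ((b:ℝ)^2 - (a:ℝ)^2) / ((a:ℝ)^2 * (b:ℝ)^2) := by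
        field_simp
      rw [expn, div_mul_eq_mul_div, div_le_iff₀ (by positivity)]
      have hab4 : M^4 ≤ (a:ℝ)^2 * (b:ℝ)^2 := by
        have := mul_le_mul hMa2 hMb2 (by positivity) (by positivity)
        linarith only [this]
      have hsum : (a:ℝ) + (b:ℝ) ≤ 2 * lam * M := by linarith only [ha2, hb2]
      have hd0 : (0:ℝ) ≤ x * ((b:ℝ) - (a:ℝ)) :=
        mul_nonneg hx0.le (by linarith only [hgap])
      have hd1 : (0:ℝ) ≤ 2*lam*x*((b:ℝ) - (a:ℝ)) :=
        mul_nonneg (mul_nonneg (mul_nonneg (by norm_num)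
          (by linarith only [hlam1])) hx0.le) (by linarith only [hgap])
      have t2 : ((a:ℝ)+(b:ℝ)) * M^3 ≤ (2*lam*M) * M^3 :=
        mul_le_mul_of_nonneg_right hsum (by positivity)
      calc x * ((b:ℝ)^2 - (a:ℝ)^2) * M^3
          = (x * ((b:ℝ) - (a:ℝ))) * (((a:ℝ)+(b:ℝ)) * M^3) := by ring
        _ ≤ (x * ((b:ℝ) - (a:ℝ))) * ((2*lam*M) * M^3) :=
            mul_le_mul_of_nonneg_left t2 hd0
        _ = (2*lam*x*((b:ℝ) - (a:ℝ))) * M^4 := by ring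
        _ ≤ (2*lam*x*((b:ℝ) - (a:ℝ))) * ((a:ℝ)^2 * (b:ℝ)^2) :=
            mul_le_mul_of_nonneg_left hab4 hd1
        _ = 2*lam*x*((b:ℝ) - (a:ℝ)) * ((a:ℝ)^2 * (b:ℝ)^2) := by ring
    have e1 : ((n a : ℤ):ℝ) - ((n b : ℤ):ℝ) ≤ x / (a:ℝ)^2 - x / (b:ℝ)^2 + h / M^2 := by
      rw [hnd a, hnd b]
      linarith only [ha4, hdab, hb3]
    have idh : h / M^2 * M^3 = h * M := by field_simp
    calc (((n a : ℤ):ℝ) - ((n b : ℤ):ℝ)) * M^3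
        ≤ (x / (a:ℝ)^2 - x / (b:ℝ)^2 + h / M^2) * M^3 :=
          mul_le_mul_of_nonneg_right e1 (by positivity)
      _ = (x / (a:ℝ)^2 - x / (b:ℝ)^2) * M^3 + h / M^2 * M^3 := by ring
      _ ≤ 2*lam*x*((b:ℝ) - (a:ℝ)) + h*M := by rw [idh]; linarith only [e2]
  -- the key triple-gap lemma
  have key : ∀ u v w : ℤ, u ∈ S → v ∈ S → w ∈ S → u < v → v < w →
      l ≤ (w:ℝ) - (u:ℝ) := by
    intro u v w hu hv hw huv hvw
    by_contra hcon
    push_neg at hcon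
    obtain ⟨hou, hMu, hul, hdu0, hduh⟩ := hmem u hu
    obtain ⟨hov, hMv, hvl, hdv0, hdvh⟩ := hmem v hv
    obtain ⟨how, hMw, hwl, hdw0, hdwh⟩ := hmem w hw
    have hU0 : (0:ℝ) < (u:ℝ) := lt_trans hM0 hMu
    have hV0 : (0:ℝ) < (v:ℝ) := lt_trans hM0 hMv
    have hW0 : (0:ℝ) < (w:ℝ) := lt_trans hM0 hMw
    have hg1 : (2:ℝ) ≤ (v:ℝ) - (u:ℝ) := by
      have hev : Even (v - u) := hov.sub_odd hou
      obtain ⟨r, hr⟩ := hev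
      have h2 : (2:ℤ) ≤ v - u := by omega
      have h2c : (2:ℝ) ≤ ((v - u : ℤ):ℝ) := by exact_mod_cast h2
      push_cast at h2c
      linarith only [h2c]
    have hg2 : (2:ℝ) ≤ (w:ℝ) - (v:ℝ) := by
      have hev : Even (w - v) := how.sub_odd hov
      obtain ⟨r, hr⟩ := hev
      have h2 : (2:ℤ) ≤ w - v := by omega
      have h2c : (2:ℝ) ≤ ((w - v : ℤ):ℝ) := by exact_mod_cast h2
      push_cast at h2c
      linarith only [h2c]
    have hG0 : (0:ℝ) < (w:ℝ) - (u:ℝ) := by linarith only [hg1, hg2]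
    set D : ℤ := n u * (w - v) - n v * (w - u) + n w * (v - u) with hD
    have hDeven : Even D := by
      rw [hD]
      have e1 : Even (w - v) := how.sub_odd hov
      have e2 : Even (w - u) := how.sub_odd hou
      have e3 : Even (v - u) := hov.sub_odd hou
      exact ((e1.mul_left _).sub (e2.mul_left _)).add (e3.mul_left _)
    set F : ℝ := x/(u:ℝ)^2*((w:ℝ)-(v:ℝ)) - x/(v:ℝ)^2*((w:ℝ)-(u:ℝ))
        + x/(w:ℝ)^2*((v:ℝ)-(u:ℝ)) with hF
    set E : ℝ := dl u*((w:ℝ)-(v:ℝ)) - dl v*((w:ℝ)-(u:ℝ)) + dl w*((v:ℝ)-(u:ℝ)) with hE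
    have hDFE : (D:ℝ) = F + E := by
      rw [hD, hF, hE]
      push_cast
      rw [hnd u, hnd v, hnd w]
      ring
    have hFid : F * ((u:ℝ)^2*(v:ℝ)^2*(w:ℝ)^2)
        = x*((v:ℝ)-(u:ℝ))*((w:ℝ)-(v:ℝ))*((w:ℝ)-(u:ℝ))
          *((u:ℝ)*(v:ℝ)+(v:ℝ)*(w:ℝ)+(w:ℝ)*(u:ℝ)) := by
      rw [hF]; field_simp; ring
    clear_value D F E
    -- polynomial bounds
    have a1 : M*M ≤ (u:ℝ)*(v:ℝ) := mul_le_mul hMu.le hMv.le hM0.le hU0.le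
    have a2 : M*M ≤ (w:ℝ)*(w:ℝ) := mul_le_mul hMw.le hMw.le hM0.le hW0.le
    have a3 : M*M ≤ (u:ℝ)*(u:ℝ) := mul_le_mul hMu.le hMu.le hM0.le hU0.le
    have a4 : M*M ≤ (v:ℝ)*(w:ℝ) := mul_le_mul hMv.le hMw.le hM0.le hV0.le
    have a5 : M*M ≤ (v:ℝ)*(v:ℝ) := mul_le_mul hMv.le hMv.le hM0.le hV0.le
    have a6 : M*M ≤ (u:ℝ)*(w:ℝ) := mul_le_mul hMu.le hMw.le hM0.le hU0.le
    have hL0 : (0:ℝ) < lam * M := by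
      have : (0:ℝ) < lam := by linarith only [hlam1]
      positivity
    have b1 : (u:ℝ)*(v:ℝ) ≤ (lam*M)*(lam*M) := mul_le_mul hul hvl hV0.le hL0.le
    have b2 : (w:ℝ)*(w:ℝ) ≤ (lam*M)*(lam*M) := mul_le_mul hwl hwl hW0.le hL0.le
    have b3 : (u:ℝ)*(u:ℝ) ≤ (lam*M)*(lam*M) := mul_le_mul hul hul hU0.le hL0.le
    have b4 : (v:ℝ)*(w:ℝ) ≤ (lam*M)*(lam*M) := mul_le_mul hvl hwl hW0.le hL0.le
    have b5 : (v:ℝ)*(v:ℝ) ≤ (lam*M)*(lam*M) := mul_le_mul hvl hvl hV0.le hL0.le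
    have b6 : (u:ℝ)*(w:ℝ) ≤ (lam*M)*(lam*M) := mul_le_mul hul hwl hW0.le hL0.le
    have m1 : M^4 ≤ (u:ℝ)*(v:ℝ)*(w:ℝ)^2 := by
      have := mul_le_mul a1 a2 (by positivity) (by positivity)
      linarith only [this]
    have m2 : M^4 ≤ (u:ℝ)^2*((v:ℝ)*(w:ℝ)) := by
      have := mul_le_mul a3 a4 (by positivity) (by positivity)
      linarith only [this]
    have m3 : M^4 ≤ (v:ℝ)^2*((u:ℝ)*(w:ℝ)) := by
      have := mul_le_mul a5 a6 (by positivity) (by positivity)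
      linarith only [this]
    have M1 : (u:ℝ)*(v:ℝ)*(w:ℝ)^2 ≤ (lam*M)^4 := by
      have := mul_le_mul b1 b2 (by positivity) (by positivity)
      linarith only [this]
    have M2 : (u:ℝ)^2*((v:ℝ)*(w:ℝ)) ≤ (lam*M)^4 := by
      have := mul_le_mul b3 b4 (by positivity) (by positivity)
      linarith only [this]
    have M3 : (v:ℝ)^2*((u:ℝ)*(w:ℝ)) ≤ (lam*M)^4 := by
      have := mul_le_mul b5 b6 (by positivity) (by positivity)
      linarith only [this]
    have hpoly_up : ((u:ℝ)*(v:ℝ)+(v:ℝ)*(w:ℝ)+(w:ℝ)*(u:ℝ))*M^4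
        ≤ 3*((u:ℝ)^2*(v:ℝ)^2*(w:ℝ)^2) := by
      have t1 : ((u:ℝ)*(v:ℝ))*M^4 ≤ ((u:ℝ)*(v:ℝ))*((u:ℝ)*(v:ℝ)*(w:ℝ)^2) :=
        mul_le_mul_of_nonneg_left m1 (by positivity)
      have t2 : ((v:ℝ)*(w:ℝ))*M^4 ≤ ((v:ℝ)*(w:ℝ))*((u:ℝ)^2*((v:ℝ)*(w:ℝ))) :=
        mul_le_mul_of_nonneg_left m2 (by positivity)
      have t3 : ((w:ℝ)*(u:ℝ))*M^4 ≤ ((w:ℝ)*(u:ℝ))*((v:ℝ)^2*((u:ℝ)*(w:ℝ))) :=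
        mul_le_mul_of_nonneg_left m3 (by positivity)
      linarith only [t1, t2, t3]
    have hpoly_low : 3*((u:ℝ)^2*(v:ℝ)^2*(w:ℝ)^2)
        ≤ ((u:ℝ)*(v:ℝ)+(v:ℝ)*(w:ℝ)+(w:ℝ)*(u:ℝ))*(lam*M)^4 := by
      have t1 : ((u:ℝ)*(v:ℝ))*((u:ℝ)*(v:ℝ)*(w:ℝ)^2) ≤ ((u:ℝ)*(v:ℝ))*(lam*M)^4 :=
        mul_le_mul_of_nonneg_left M1 (by positivity)
      have t2 : ((v:ℝ)*(w:ℝ))*((u:ℝ)^2*((v:ℝ)*(w:ℝ))) ≤ ((v:ℝ)*(w:ℝ))*(lam*M)^4 :=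
        mul_le_mul_of_nonneg_left M2 (by positivity)
      have t3 : ((w:ℝ)*(u:ℝ))*((v:ℝ)^2*((u:ℝ)*(w:ℝ))) ≤ ((w:ℝ)*(u:ℝ))*(lam*M)^4 :=
        mul_le_mul_of_nonneg_left M3 (by positivity)
      linarith only [t1, t2, t3]
    have hgg : (0:ℝ) ≤ x*((v:ℝ)-(u:ℝ))*((w:ℝ)-(v:ℝ))*((w:ℝ)-(u:ℝ)) := by
      apply mul_nonneg (mul_nonneg (mul_nonneg hx0.le (by linarith only [hg1]))
        (by linarith only [hg2]))
      linarith only [hg1, hg2]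
    have hFup : F * M^4 ≤ 3*(x*((v:ℝ)-(u:ℝ))*((w:ℝ)-(v:ℝ))*((w:ℝ)-(u:ℝ))) := by
      have step : (F*M^4)*((u:ℝ)^2*(v:ℝ)^2*(w:ℝ)^2)
          ≤ (3*(x*((v:ℝ)-(u:ℝ))*((w:ℝ)-(v:ℝ))*((w:ℝ)-(u:ℝ))))*((u:ℝ)^2*(v:ℝ)^2*(w:ℝ)^2) := by
        calc (F*M^4)*((u:ℝ)^2*(v:ℝ)^2*(w:ℝ)^2)
            = (F*((u:ℝ)^2*(v:ℝ)^2*(w:ℝ)^2))*M^4 := by ring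
          _ = (x*((v:ℝ)-(u:ℝ))*((w:ℝ)-(v:ℝ))*((w:ℝ)-(u:ℝ))
                *((u:ℝ)*(v:ℝ)+(v:ℝ)*(w:ℝ)+(w:ℝ)*(u:ℝ)))*M^4 := by rw [hFid]
          _ = (x*((v:ℝ)-(u:ℝ))*((w:ℝ)-(v:ℝ))*((w:ℝ)-(u:ℝ)))
                *(((u:ℝ)*(v:ℝ)+(v:ℝ)*(w:ℝ)+(w:ℝ)*(u:ℝ))*M^4) := by ring
          _ ≤ (x*((v:ℝ)-(u:ℝ))*((w:ℝ)-(v:ℝ))*((w:ℝ)-(u:ℝ)))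
                *(3*((u:ℝ)^2*(v:ℝ)^2*(w:ℝ)^2)) :=
              mul_le_mul_of_nonneg_left hpoly_up hgg
          _ = (3*(x*((v:ℝ)-(u:ℝ))*((w:ℝ)-(v:ℝ))*((w:ℝ)-(u:ℝ))))
                *((u:ℝ)^2*(v:ℝ)^2*(w:ℝ)^2) := by ring
      exact le_of_mul_le_mul_right step (by positivity)
    have hFlow : 3*(x*((v:ℝ)-(u:ℝ))*((w:ℝ)-(v:ℝ))*((w:ℝ)-(u:ℝ))) ≤ F * (lam*M)^4 := by
      have step : (3*(x*((v:ℝ)-(u:ℝ))*((w:ℝ)-(v:ℝ))*((w:ℝ)-(u:ℝ))))*((u:ℝ)^2*(v:ℝ)^2*(w:ℝ)^2)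
          ≤ (F*(lam*M)^4)*((u:ℝ)^2*(v:ℝ)^2*(w:ℝ)^2) := by
        calc (3*(x*((v:ℝ)-(u:ℝ))*((w:ℝ)-(v:ℝ))*((w:ℝ)-(u:ℝ))))*((u:ℝ)^2*(v:ℝ)^2*(w:ℝ)^2)
            = (x*((v:ℝ)-(u:ℝ))*((w:ℝ)-(v:ℝ))*((w:ℝ)-(u:ℝ)))
                *(3*((u:ℝ)^2*(v:ℝ)^2*(w:ℝ)^2)) := by ring
          _ ≤ (x*((v:ℝ)-(u:ℝ))*((w:ℝ)-(v:ℝ))*((w:ℝ)-(u:ℝ)))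
                *(((u:ℝ)*(v:ℝ)+(v:ℝ)*(w:ℝ)+(w:ℝ)*(u:ℝ))*(lam*M)^4) :=
              mul_le_mul_of_nonneg_left hpoly_low hgg
          _ = (x*((v:ℝ)-(u:ℝ))*((w:ℝ)-(v:ℝ))*((w:ℝ)-(u:ℝ))
                *((u:ℝ)*(v:ℝ)+(v:ℝ)*(w:ℝ)+(w:ℝ)*(u:ℝ)))*(lam*M)^4 := by ring
          _ = (F*((u:ℝ)^2*(v:ℝ)^2*(w:ℝ)^2))*(lam*M)^4 := by rw [hFid]
          _ = (F*(lam*M)^4)*((u:ℝ)^2*(v:ℝ)^2*(w:ℝ)^2) := by ring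
      exact le_of_mul_le_mul_right step (by positivity)
    -- bounds on E
    have hMu2 : M^2 ≤ (u:ℝ)^2 := by
      have := mul_self_le_mul_self hM0.le hMu.le
      linarith only [this]
    have hMv2 : M^2 ≤ (v:ℝ)^2 := by
      have := mul_self_le_mul_self hM0.le hMv.le
      linarith only [this]
    have hMw2 : M^2 ≤ (w:ℝ)^2 := by
      have := mul_self_le_mul_self hM0.le hMw.le
      linarith only [this]
    have hdum : dl u ≤ h/M^2 :=
      le_trans hduh (div_le_div_of_nonneg_left hh0.le (by positivity) hMu2)
    have hdvm : dl v ≤ h/M^2 :=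
      le_trans hdvh (div_le_div_of_nonneg_left hh0.le (by positivity) hMv2)
    have hdwm : dl w ≤ h/M^2 :=
      le_trans hdwh (div_le_div_of_nonneg_left hh0.le (by positivity) hMw2)
    have hEup : E ≤ h/M^2*((w:ℝ)-(u:ℝ)) := by
      rw [hE]
      have t1 : dl u*((w:ℝ)-(v:ℝ)) ≤ h/M^2*((w:ℝ)-(v:ℝ)) :=
        mul_le_mul_of_nonneg_right hdum (by linarith only [hg2])
      have t2 : dl w*((v:ℝ)-(u:ℝ)) ≤ h/M^2*((v:ℝ)-(u:ℝ)) :=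
        mul_le_mul_of_nonneg_right hdwm (by linarith only [hg1])
      have t3 : 0 ≤ dl v*((w:ℝ)-(u:ℝ)) :=
        mul_nonneg hdv0.le (by linarith only [hg1, hg2])
      linarith only [t1, t2, t3]
    have hElow : -(h/M^2*((w:ℝ)-(u:ℝ))) ≤ E := by
      rw [hE]
      have t1 : 0 ≤ dl u*((w:ℝ)-(v:ℝ)) := mul_nonneg hdu0.le (by linarith only [hg2])
      have t2 : 0 ≤ dl w*((v:ℝ)-(u:ℝ)) := mul_nonneg hdw0.le (by linarith only [hg1])
      have t3 : dl v*((w:ℝ)-(u:ℝ)) ≤ h/M^2*((w:ℝ)-(u:ℝ)) :=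
        mul_le_mul_of_nonneg_right hdvm (by linarith only [hg1, hg2])
      linarith only [t1, t2, t3]
    rcases le_or_gt D 0 with hDle | hDpos
    · -- degenerate case: impossible
      have hD0R : F + E ≤ 0 := by
        rw [← hDFE]
        exact_mod_cast Int.cast_nonpos.mpr hDle
      have hFh : F ≤ h/M^2*((w:ℝ)-(u:ℝ)) := by linarith only [hD0R, hElow]
      have key1 : 3*(x*(((v:ℝ)-(u:ℝ))*((w:ℝ)-(v:ℝ)))) ≤ h*lam^4*M^2 := by
        have s2 : 3*(x*((v:ℝ)-(u:ℝ))*((w:ℝ)-(v:ℝ))*((w:ℝ)-(u:ℝ)))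
            ≤ (h/M^2*((w:ℝ)-(u:ℝ)))*(lam*M)^4 :=
          le_trans hFlow (mul_le_mul_of_nonneg_right hFh (by positivity))
        have idq : (h/M^2*((w:ℝ)-(u:ℝ)))*(lam*M)^4 = (h*lam^4*M^2)*((w:ℝ)-(u:ℝ)) := by
          field_simp
        rw [idq] at s2
        exact le_of_mul_le_mul_right (by linarith only [s2]) hG0
      rcases lt_or_ge (h*lam^4*M^2) (12*x) with hi | hii
      · have hgg4 : (4:ℝ) ≤ ((v:ℝ)-(u:ℝ))*((w:ℝ)-(v:ℝ)) := by
          nlinarith only [hg1, hg2]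
        have h12 : 12*x ≤ 3*(x*(((v:ℝ)-(u:ℝ))*((w:ℝ)-(v:ℝ)))) := by
          nlinarith only [hgg4, hx0]
        linarith only [h12, key1, hi]
      · obtain ⟨p1uv, p2uv⟩ := pair u v hu hv huv
        obtain ⟨p1vw, p2vw⟩ := pair v w hv hw hvw
        have p1uvR : (1:ℝ) ≤ ((n u : ℤ):ℝ) - ((n v : ℤ):ℝ) := by
          exact_mod_cast p1uv
        have p1vwR : (1:ℝ) ≤ ((n v : ℤ):ℝ) - ((n w : ℤ):ℝ) := by
          exact_mod_cast p1vw
        have hq1 : M^3 - h*M ≤ 2*lam*x*((v:ℝ)-(u:ℝ)) := by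
          have := mul_le_mul_of_nonneg_right p1uvR (show (0:ℝ) ≤ M^3 by positivity)
          linarith only [this, p2uv]
        have hq2 : M^3 - h*M ≤ 2*lam*x*((w:ℝ)-(v:ℝ)) := by
          have := mul_le_mul_of_nonneg_right p1vwR (show (0:ℝ) ≤ M^3 by positivity)
          linarith only [this, p2vw]
        have hhM0 : (0:ℝ) ≤ h*M := mul_nonneg hh0.le hM0.le
        have e4 : (2250:ℝ)*h*M ≤ M^3 := by
          have := mul_le_mul_of_nonneg_right hhM2 hM0.le
          linarith only [this]
        have hP3 : (0:ℝ) ≤ M^3 - h*M := by linarith only [e4, hhM0]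
        have e1 : (M^3-h*M)*(M^3-h*M)
            ≤ (2*lam*x*((v:ℝ)-(u:ℝ)))*(2*lam*x*((w:ℝ)-(v:ℝ))) := by
          apply mul_le_mul hq1 hq2 hP3
          exact mul_nonneg (mul_nonneg (mul_nonneg (by norm_num)
            (by linarith only [hlam1])) hx0.le) (by linarith only [hg1])
        have t1 := mul_le_mul_of_nonneg_left e1 (show (0:ℝ) ≤ 3*x by positivity)
        have t2 := mul_le_mul_of_nonneg_left key1
          (show (0:ℝ) ≤ 4*lam^2*x^2 by positivity)
        have e3 : 3*x*((M^3-h*M)*(M^3-h*M)) ≤ 4*lam^6*x^2*h*M^2 := by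
          nlinarith only [t1, t2]
        have e4b : (2249/2250)*M^3 ≤ M^3 - h*M := by linarith only [e4]
        have e5pre : ((2249/2250)*M^3)*((2249/2250)*M^3) ≤ (M^3-h*M)*(M^3-h*M) :=
          mul_le_mul e4b e4b (by positivity) hP3
        have e5 : 3*(2249/2250)^2*(x*M^6) ≤ 4*lam^6*x^2*h*M^2 := by
          have := mul_le_mul_of_nonneg_left e5pre (show (0:ℝ) ≤ 3*x by positivity)
          nlinarith only [this, e3]
        have e6 : 3*(2249/2250)^2*(x*M^4) ≤ 4*lam^6*x^2*h := by
          refine le_of_mul_le_mul_right ?_ (show (0:ℝ) < M^2 by positivity)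
          nlinarith only [e5]
        have e7 : 144*x^2 ≤ h^2*lam^8*M^4 := by
          have h12 : (0:ℝ) ≤ 12*x := by positivity
          have := mul_self_le_mul_self h12 hii
          nlinarith only [this]
        have f1 := mul_le_mul_of_nonneg_left e6 (show (0:ℝ) ≤ h^2*lam^8 by positivity)
        have f2 := mul_le_mul_of_nonneg_left e7
          (show (0:ℝ) ≤ 3*(2249/2250)^2*x by positivity)
        have hh3 : h^3 ≤ 8*x := by
          calc h^3 ≤ (2*A)^3 := pow_le_pow_left₀ hh0.le hh2 3
            _ = 8*A^3 := by ring
            _ = 8*x := by rw [hA3]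
        have hlam14 : lam^14 ≤ 12.84 := by
          have h0 : (0:ℝ) ≤ lam := by linarith only [hlam1]
          have hp := pow_le_pow_left₀ h0 hlam2 14
          norm_num at hp
          linarith only [hp]
        have f3 : lam^14*h^3 ≤ 12.84*(8*x) :=
          mul_le_mul hlam14 hh3 (by positivity) (by norm_num)
        have f4 := mul_le_mul_of_nonneg_left f3 (show (0:ℝ) ≤ 4*x^2 by positivity)
        have hx3 : (0:ℝ) < x^3 := by positivity
        nlinarith only [f1, f2, f4, hx3]
    · -- main case : D ≥ 2
      have hD2 : (2:ℤ) ≤ D := by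
        obtain ⟨k, hk⟩ := hDeven
        omega
      have hD2R : (2:ℝ) ≤ F + E := by
        rw [← hDFE]
        exact_mod_cast hD2
      have c1a := mul_le_mul_of_nonneg_right hD2R (show (0:ℝ) ≤ M^4 by positivity)
      have hEup4 := mul_le_mul_of_nonneg_right hEup (show (0:ℝ) ≤ M^4 by positivity)
      have idE : (h/M^2*((w:ℝ)-(u:ℝ)))*M^4 = h*((w:ℝ)-(u:ℝ))*M^2 := by
        field_simp
      have c1 : 2*M^4 ≤ 3*(x*((v:ℝ)-(u:ℝ))*((w:ℝ)-(v:ℝ))*((w:ℝ)-(u:ℝ)))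
          + h*((w:ℝ)-(u:ℝ))*M^2 := by
        rw [idE] at hEup4
        linarith only [hFup, c1a, hEup4]
      have c2 : 4*(((v:ℝ)-(u:ℝ))*((w:ℝ)-(v:ℝ))) ≤ ((w:ℝ)-(u:ℝ))^2 := by
        linarith only [sq_nonneg ((w:ℝ)+(u:ℝ)-2*(v:ℝ))]
      have c3 : 12*(x*((v:ℝ)-(u:ℝ))*((w:ℝ)-(v:ℝ))*((w:ℝ)-(u:ℝ)))
          ≤ 3*(x*((w:ℝ)-(u:ℝ))^3) := by
        have h30 : (0:ℝ) ≤ 3*x*((w:ℝ)-(u:ℝ)) :=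
          mul_nonneg (by positivity) (by linarith only [hG0])
        have := mul_le_mul_of_nonneg_left c2 h30
        linarith only [this]
      have c4 : h*((w:ℝ)-(u:ℝ)) ≤ 0.00294*M^2 := by
        have := mul_le_mul_of_nonneg_left hcon.le hh0.le
        linarith only [this, hll]
      have c4b : h*((w:ℝ)-(u:ℝ))*M^2 ≤ 0.00294*M^4 := by
        have := mul_le_mul_of_nonneg_right c4 (show (0:ℝ) ≤ M^2 by positivity)
        linarith only [this]
      have c5 : 7.98824*M^4 ≤ 3*(x*((w:ℝ)-(u:ℝ))^3) := by
        linarith only [c1, c3, c4b]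
      have c6 : x*((w:ℝ)-(u:ℝ))^3 < x*l^3 := by
        have h1 : ((w:ℝ)-(u:ℝ))^3 < l^3 := by
          apply pow_lt_pow_left₀ hcon (by linarith only [hG0])
          norm_num
        exact mul_lt_mul_of_pos_left h1 hx0
      rw [hxl3] at c6
      have hM4 : (0:ℝ) < M^4 := by positivity
      linarith only [c5, c6, hM4]
  -- finiteness
  have hSsub : S ⊆ ↑(Finset.Ioc ⌊M⌋ ⌈lam*M⌉) := by
    intro t ht
    obtain ⟨-, h1, h2, -, -⟩ := hmem t ht
    simp only [Finset.coe_Ioc, Set.mem_Ioc]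
    constructor
    · exact Int.floor_lt.mpr h1
    · have h3 : (t:ℝ) ≤ (⌈lam*M⌉:ℝ) := le_trans h2 (Int.le_ceil _)
      exact_mod_cast h3
  have hfin : S.Finite := Set.Finite.subset (Finset.Ioc ⌊M⌋ ⌈lam*M⌉).finite_toSet hSsub
  have hcard : S.ncard = hfin.toFinset.card := Set.ncard_eq_toFinset_card S hfin
  set T : Finset ℤ := hfin.toFinset with hT
  have hTS : ∀ t : ℤ, t ∈ T ↔ t ∈ S := fun t => Set.Finite.mem_toFinset hfin
  -- pigeonhole
  set K : ℤ := ⌊((lam - 1) * M) / l⌋ with hK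
  have hdivnn : (0:ℝ) ≤ ((lam - 1) * M) / l :=
    div_nonneg (mul_nonneg (by linarith only [hlam1]) hM0.le) hl0.le
  have hK0 : (0:ℤ) ≤ K := Int.floor_nonneg.mpr hdivnn
  set f : ℤ → ℤ := fun t => ⌊((t:ℝ) - M) / l⌋ with hf
  have hmaps : ∀ t ∈ T, f t ∈ Finset.Icc (0:ℤ) K := by
    intro t ht
    obtain ⟨-, h1, h2, -, -⟩ := hmem t ((hTS t).mp ht)
    simp only [Finset.mem_Icc]
    constructor
    · apply Int.floor_nonneg.mpr
      apply div_nonneg (by linarith only [h1]) hl0.le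
    · apply Int.floor_le_floor
      rw [div_eq_mul_inv, div_eq_mul_inv]
      exact mul_le_mul_of_nonneg_right (by linarith only [h2])
        (inv_nonneg.mpr hl0.le)
  have hfib : ∀ a ∈ Finset.Icc (0:ℤ) K, (T.filter (fun t => f t = a)).card ≤ 2 := by
    intro a _
    by_contra hcge
    push_neg at hcge
    set Tf : Finset ℤ := T.filter (fun t => f t = a) with hTf
    have h3 : 3 ≤ Tf.card := hcge
    have hne : Tf.Nonempty := Finset.card_pos.mp (by omega)
    set p : ℤ := Tf.min' hne with hp
    set q : ℤ := Tf.max' hne with hq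
    have hpq : p < q := Finset.min'_lt_max'_of_card Tf (by omega)
    have hpTf : p ∈ Tf := Tf.min'_mem hne
    have hqTf : q ∈ Tf := Tf.max'_mem hne
    have hqe : q ∈ Tf.erase p := Finset.mem_erase.mpr ⟨by omega, hqTf⟩
    have hcardee : 1 ≤ ((Tf.erase p).erase q).card := by
      have c1 : (Tf.erase p).card = Tf.card - 1 := Finset.card_erase_of_mem hpTf
      have c2 : ((Tf.erase p).erase q).card = (Tf.erase p).card - 1 :=
        Finset.card_erase_of_mem hqe
      omega
    obtain ⟨c, hcmem⟩ := Finset.card_pos.mp (by omega : 0 < ((Tf.erase p).erase q).card)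
    have hcq : c ≠ q := (Finset.mem_erase.mp hcmem).1
    have hcp : c ≠ p := (Finset.mem_erase.mp (Finset.mem_of_mem_erase hcmem)).1
    have hcTf : c ∈ Tf := Finset.mem_of_mem_erase (Finset.mem_of_mem_erase hcmem)
    have h1c : p ≤ c := Tf.min'_le c hcTf
    have h2c : c ≤ q := Tf.le_max' c hcTf
    have hpc : p < c := lt_of_le_of_ne h1c (Ne.symm hcp)
    have hcq2 : c < q := lt_of_le_of_ne h2c hcq
    have hpS : p ∈ S := (hTS p).mp (Finset.mem_filter.mp hpTf).1
    have hqS : q ∈ S := (hTS q).mp (Finset.mem_filter.mp hqTf).1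
    have hcS : c ∈ S := (hTS c).mp (Finset.mem_filter.mp hcTf).1
    have hfp : f p = a := (Finset.mem_filter.mp hpTf).2
    have hfq : f q = a := (Finset.mem_filter.mp hqTf).2
    have hgap := key p c q hpS hcS hqS hpc hcq2
    have hfp' : ⌊((p:ℝ) - M)/l⌋ = a := hfp
    have hfq' : ⌊((q:ℝ) - M)/l⌋ = a := hfq
    have b1 : (a:ℝ) ≤ ((p:ℝ) - M)/l := by
      rw [← hfp']
      exact Int.floor_le _
    have b2 : ((q:ℝ) - M)/l < (a:ℝ) + 1 := by
      rw [← hfq']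
      exact Int.lt_floor_add_one _
    have b3 : ((q:ℝ) - (p:ℝ))/l < 1 := by
      have hsplit : ((q:ℝ) - M)/l - ((p:ℝ) - M)/l = ((q:ℝ) - (p:ℝ))/l := by ring
      linarith only [b1, b2, hsplit]
    have b4 : (q:ℝ) - (p:ℝ) < l := (div_lt_one hl0).mp b3
    linarith only [b4, hgap]
  have hcount : T.card ≤ 2 * (Finset.Icc (0:ℤ) K).card :=
    Finset.card_le_mul_card_image_of_maps_to hmaps 2 hfib
  have hIcc : (Finset.Icc (0:ℤ) K).card = (K+1).toNat := by
    rw [Int.card_Icc]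
    norm_num
  rw [hIcc] at hcount
  -- final assembly
  have hKc : (((K+1).toNat : ℕ) : ℝ) = (K:ℝ) + 1 := by
    have h1 : (((K+1).toNat : ℕ) : ℤ) = K + 1 := Int.toNat_of_nonneg (by omega)
    have h2 := congrArg (fun z : ℤ => (z:ℝ)) h1
    push_cast at h2
    push_cast
    linarith only [h2]
  have hTR : (T.card : ℝ) ≤ 2*((K:ℝ)+1) := by
    calc (T.card : ℝ) ≤ ((2 * (K+1).toNat : ℕ) : ℝ) := by exact_mod_cast hcount
      _ = 2 * (((K+1).toNat : ℕ) : ℝ) := by push_cast; ring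
      _ = 2*((K:ℝ)+1) := by rw [hKc]
  have hKR : (K:ℝ) ≤ ((lam-1)*M)/l := Int.floor_le _
  have hstep : 2*(((lam-1)*M)/l) + 2 = 1.4430*(lam-1)*A*B⁻¹ + 2 := by
    rw [hl, ← hB3]
    field_simp
  have hMB : M ^ (-(1:ℝ)/3) = B⁻¹ := by
    rw [show (-(1:ℝ)/3) = -((1:ℝ)/3) by norm_num, Real.rpow_neg hM0.le, ← hBdef]
  rw [hMB, hcard]
  calc ((T.card : ℕ) : ℝ) ≤ 2*((K:ℝ)+1) := hTR
    _ ≤ 2*(((lam-1)*M)/l) + 2 := by linarith only [hKR]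
    _ = 1.4430*(lam-1)*A*B⁻¹ + 2 := hstep
end

section
/- Let x ≥ 1 and h ≥ 1 be reals and let J ≥ 2 be a real number. Then the number N(x,h) of integers n with x < n ≤ x + h that are not squarefree satisfies N(x,h) ≤ h·(1 − ∏_{p ≤ J} (1 − 1/p²)) + 2^{π(J)} + Σ_{p > J} (⌊(x+h)/p²⌋ − ⌊x/p²⌋), where the product is over primes p ≤ J, the sum is over primes p > J (only finitely many terms are nonzero, namely those with p² ≤ x + h), and π(J) denotes the number of primes at most J. -/
private lemma count_dvd_Ioc (M N m : ℕ) :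
    ((Finset.Ioc M N).filter (fun n => m ∣ n)).card = N / m - M / m := by
  rcases le_or_gt M N with hMN | hMN
  · have h0 : Finset.Ioc 0 N = Finset.Ioc 0 M ∪ Finset.Ioc M N :=
      (Finset.Ioc_union_Ioc_eq_Ioc (Nat.zero_le M) hMN).symm
    have hd : Disjoint ((Finset.Ioc 0 M).filter (fun n => m ∣ n))
        ((Finset.Ioc M N).filter (fun n => m ∣ n)) := by
      apply Finset.disjoint_filter_filter
      rw [Finset.disjoint_left]
      intro a ha ha'
      simp only [Finset.mem_Ioc] at ha ha'
      omega
    have h1 := Nat.Ioc_filter_dvd_card_eq_div N m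
    have h2 := Nat.Ioc_filter_dvd_card_eq_div M m
    rw [h0, Finset.filter_union, Finset.card_union_of_disjoint hd, h2] at h1
    omega
  · rw [Finset.Ioc_eq_empty (by omega), Finset.filter_empty, Finset.card_empty]
    have := Nat.div_le_div_right (c := m) hMN.le
    omega

private lemma prod_sq_dvd (t : Finset ℕ) (ht : ∀ p ∈ t, p.Prime) (n : ℕ) :
    (∀ p ∈ t, p ^ 2 ∣ n) ↔ (∏ p ∈ t, p) ^ 2 ∣ n := by
  classical
  induction t using Finset.induction_on with
  | empty => simp
  | @insert a u ha ih =>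
    have hap : a.Prime := ht a (Finset.mem_insert_self a u)
    have hu : ∀ p ∈ u, p.Prime := fun p hp => ht p (Finset.mem_insert_of_mem hp)
    have hcop : Nat.Coprime (a ^ 2) ((∏ p ∈ u, p) ^ 2) := by
      apply Nat.Coprime.pow
      apply Nat.Coprime.prod_right
      intro q hq
      exact (Nat.coprime_primes hap (hu q hq)).mpr (fun he => ha (he ▸ hq))
    rw [Finset.prod_insert ha, mul_pow]
    constructor
    · intro hall
      exact hcop.mul_dvd_of_dvd_of_dvd (hall a (Finset.mem_insert_self a u))
        ((ih hu).mp fun p hp => hall p (Finset.mem_insert_of_mem hp))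
    · intro hdvd p hp
      rcases Finset.mem_insert.mp hp with rfl | hp
      · exact (dvd_mul_right _ _).trans hdvd
      · exact ((ih hu).mpr ((dvd_mul_left _ _).trans hdvd)) p hp

private lemma floorcast_div_bounds (y : ℝ) (hy : 0 ≤ y) (m : ℕ) (hm : 0 < m) :
    y / m - 1 < ((⌊y⌋₊ / m : ℕ) : ℝ) ∧ ((⌊y⌋₊ / m : ℕ) : ℝ) ≤ y / m := by
  rw [← Nat.floor_div_natCast y m]
  have h0 : (0:ℝ) ≤ y / m := div_nonneg hy (by positivity)
  exact ⟨by linarith [Nat.lt_floor_add_one (y / (m:ℝ))], Nat.floor_le h0⟩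

private lemma small_count (x h : ℝ) (hx : 1 ≤ x) (hh : 1 ≤ h) (s : Finset ℕ)
    (hs : ∀ p ∈ s, p.Prime) :
    ((((Finset.Ioc ⌊x⌋₊ ⌊x + h⌋₊).filter (fun n => ∃ p ∈ s, p ^ 2 ∣ n)).card : ℕ) : ℝ) ≤
      h * (1 - ∏ p ∈ s, (1 - 1 / (p : ℝ) ^ 2)) + 2 ^ s.card := by
  classical
  set M := ⌊x⌋₊ with hMdef
  set N := ⌊x + h⌋₊ with hNdef
  have hx0 : (0:ℝ) ≤ x := by linarith
  have hxh0 : (0:ℝ) ≤ x + h := by linarith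
  have hMN : M ≤ N := Nat.floor_mono (by linarith)
  set E := (s.powerset).erase ∅ with hEdef
  set c : Finset ℕ → ℝ := fun t =>
    ((N / (∏ p ∈ t, p) ^ 2 : ℕ) : ℝ) - ((M / (∏ p ∈ t, p) ^ 2 : ℕ) : ℝ) with hcdef
  set r : Finset ℕ → ℝ := fun t => 1 / (((∏ p ∈ t, p : ℕ)) : ℝ) ^ 2 with hrdef
  have hdpos : ∀ t ∈ s.powerset, 0 < (∏ p ∈ t, p) ^ 2 := by
    intro t ht
    have : ∀ p ∈ t, 0 < p := fun p hp => (hs p (Finset.mem_powerset.mp ht hp)).pos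
    exact pow_pos (Finset.prod_pos this) 2
  -- step 1: card as a sum of indicators
  have step1 : ((((Finset.Ioc M N).filter (fun n => ∃ p ∈ s, p ^ 2 ∣ n)).card : ℕ) : ℝ)
      = ∑ n ∈ Finset.Ioc M N, (1 - ∏ p ∈ s, (1 - if p ^ 2 ∣ n then (1:ℝ) else 0)) := by
    rw [Finset.card_filter]
    push_cast
    apply Finset.sum_congr rfl
    intro n _
    by_cases hn : ∃ p ∈ s, p ^ 2 ∣ n
    · obtain ⟨p, hp, hpd⟩ := hn
      rw [if_pos ⟨p, hp, hpd⟩, Finset.prod_eq_zero hp (by simp [hpd])]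
      ring
    · rw [if_neg hn, Finset.prod_eq_one (fun p hp => by
        rw [if_neg (fun hd => hn ⟨p, hp, hd⟩)]; ring)]
      ring
  -- step 2: expand the product
  have step2 : ∀ n, ∏ p ∈ s, (1 - if p ^ 2 ∣ n then (1:ℝ) else 0)
      = ∑ t ∈ s.powerset, (-1 : ℝ) ^ t.card * (if (∏ p ∈ t, p) ^ 2 ∣ n then (1:ℝ) else 0) := by
    intro n
    rw [Finset.prod_sub (fun _ => (1:ℝ)) (fun p => if p ^ 2 ∣ n then (1:ℝ) else 0)]
    apply Finset.sum_congr rfl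
    intro t ht
    rw [Finset.prod_const_one, mul_one]
    congr 1
    have htp : ∀ p ∈ t, p.Prime := fun p hp => hs p (Finset.mem_powerset.mp ht hp)
    by_cases hd : (∏ p ∈ t, p) ^ 2 ∣ n
    · rw [if_pos hd, Finset.prod_eq_one (fun p hp => if_pos (((prod_sq_dvd t htp n).mpr hd) p hp))]
    · rw [if_neg hd]
      obtain ⟨p, hp, hpd⟩ : ∃ p ∈ t, ¬ p ^ 2 ∣ n := by
        by_contra hc
        push_neg at hc
        exact hd ((prod_sq_dvd t htp n).mp hc)
      exact Finset.prod_eq_zero hp (by rw [if_neg hpd])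
  -- step 3: sum the indicators
  have step3 : ∑ n ∈ Finset.Ioc M N, ∑ t ∈ s.powerset,
        (-1 : ℝ) ^ t.card * (if (∏ p ∈ t, p) ^ 2 ∣ n then (1:ℝ) else 0)
      = ∑ t ∈ s.powerset, (-1 : ℝ) ^ t.card * c t := by
    rw [Finset.sum_comm]
    apply Finset.sum_congr rfl
    intro t ht
    rw [← Finset.mul_sum]
    congr 1
    rw [Finset.sum_boole, hcdef]
    simp only
    rw [count_dvd_Ioc, Nat.cast_sub (Nat.div_le_div_right hMN)]
  -- identity for the bad count
  have hbad : ((((Finset.Ioc M N).filter (fun n => ∃ p ∈ s, p ^ 2 ∣ n)).card : ℕ) : ℝ)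
      = -∑ t ∈ E, (-1 : ℝ) ^ t.card * c t := by
    rw [step1, Finset.sum_sub_distrib, Finset.sum_congr rfl (fun n _ => step2 n), step3,
      Finset.sum_const, Nat.card_Ioc, nsmul_eq_mul, mul_one,
      ← Finset.add_sum_erase _ _ (Finset.empty_mem_powerset s)]
    have hc0 : c ∅ = ((N : ℝ) - (M : ℝ)) := by
      rw [hcdef]
      simp
    rw [← hEdef]
    simp only [Finset.card_empty, pow_zero, one_mul, hc0]
    rw [Nat.cast_sub hMN]
    ring
  -- identity for the product
  have hprod : 1 - ∏ p ∈ s, (1 - 1 / (p : ℝ) ^ 2) = -∑ t ∈ E, (-1 : ℝ) ^ t.card * r t := by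
    have hrt : ∀ t : Finset ℕ, ∏ p ∈ t, (1 / (p:ℝ) ^ 2) = r t := by
      intro t
      rw [hrdef]
      simp only
      push_cast
      rw [← Finset.prod_pow]
      simp only [one_div]
      exact Finset.prod_inv_distrib (fun p : ℕ => (p:ℝ) ^ 2)
    rw [Finset.prod_sub (fun _ => (1:ℝ)) (fun p : ℕ => 1 / (p:ℝ) ^ 2),
      ← Finset.add_sum_erase _ _ (Finset.empty_mem_powerset s), ← hEdef]
    have hr0 : (-1:ℝ) ^ (∅ : Finset ℕ).card * (∏ p ∈ s \ ∅, (1:ℝ)) * ∏ p ∈ (∅ : Finset ℕ), (1 / (p:ℝ) ^ 2) = 1 := by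
      simp
    rw [hr0, Finset.sum_congr rfl (fun t ht => by rw [Finset.prod_const_one, mul_one, hrt t])]
    ring
  -- per-term bound
  have hterm : ∀ t ∈ E, (-1 : ℝ) ^ t.card * (h * r t - c t) ≤ 1 := by
    intro t ht
    have htP : t ∈ s.powerset := Finset.mem_of_mem_erase ht
    have hD : 0 < (∏ p ∈ t, p) ^ 2 := hdpos t htP
    set D := (∏ p ∈ t, p) ^ 2 with hDdef
    have hb1 := floorcast_div_bounds (x + h) hxh0 D hD
    have hb2 := floorcast_div_bounds x hx0 D hD
    have hDr : ((D : ℕ) : ℝ) = (((∏ p ∈ t, p : ℕ)) : ℝ) ^ 2 := by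
      rw [hDdef]
      push_cast
      ring
    have habs : |h * r t - c t| ≤ 1 := by
      rw [abs_le]
      have hrw : h * r t = (x + h) / ((D:ℕ):ℝ) - x / ((D:ℕ):ℝ) := by
        rw [hrdef]
        simp only
        rw [hDr]
        ring
      constructor
      · rw [hcdef]; simp only; rw [hrw]
        linarith [hb1.1, hb2.2]
      · rw [hcdef]; simp only; rw [hrw]
        linarith [hb1.2, hb2.1]
    calc (-1 : ℝ) ^ t.card * (h * r t - c t) ≤ |(-1 : ℝ) ^ t.card * (h * r t - c t)| := le_abs_self _
      _ = |h * r t - c t| := by rw [abs_mul, abs_pow, abs_neg, abs_one, one_pow, one_mul]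
      _ ≤ 1 := habs
  -- combine
  rw [hbad, hprod]
  have hsplit : ∑ t ∈ E, (-1 : ℝ) ^ t.card * (h * r t - c t)
      = h * (∑ t ∈ E, (-1 : ℝ) ^ t.card * r t) - ∑ t ∈ E, (-1 : ℝ) ^ t.card * c t := by
    rw [Finset.mul_sum, ← Finset.sum_sub_distrib]
    exact Finset.sum_congr rfl (fun t _ => by ring)
  have hkey : ∑ t ∈ E, (-1 : ℝ) ^ t.card * (h * r t - c t) ≤ 2 ^ s.card := by
    calc ∑ t ∈ E, (-1 : ℝ) ^ t.card * (h * r t - c t) ≤ ∑ t ∈ E, (1:ℝ) :=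
        Finset.sum_le_sum hterm
      _ = (E.card : ℝ) := by simp
      _ ≤ ((s.powerset.card : ℕ) : ℝ) := by
          exact_mod_cast Nat.cast_le.mpr (Finset.card_erase_le)
      _ = 2 ^ s.card := by rw [Finset.card_powerset]; push_cast; ring
  linarith [hkey, hsplit]

/-- Inequality (2.1): sieving the interval `(x, x+h]` by squares of primes. The number
of non-squarefree integers in `(x, x+h]` is at most
`h·(1 − ∏_{p ≤ J}(1 − 1/p²)) + 2^{π(J)} + ∑_{p > J}(⌊(x+h)/p²⌋ − ⌊x/p²⌋)`.
The sum over primes `p > J` has only finitely many nonzero terms, so it is written as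
a `tsum`. -/
theorem count_nonsquarefree_le (x h J : ℝ) (hx : 1 ≤ x) (hh : 1 ≤ h) (hJ : 2 ≤ J) :
    (({n : ℕ | x < (n : ℝ) ∧ (n : ℝ) ≤ x + h ∧ ¬ Squarefree n}.ncard : ℝ)) ≤
      h * (1 - ∏ p ∈ (Finset.Iic ⌊J⌋₊).filter Nat.Prime, (1 - 1 / (p : ℝ) ^ 2)) +
        2 ^ ((Finset.Iic ⌊J⌋₊).filter Nat.Prime).card +
        ∑' p : ℕ, (if p.Prime ∧ J < (p : ℝ) then
          ((⌊(x + h) / (p : ℝ) ^ 2⌋ : ℝ) - (⌊x / (p : ℝ) ^ 2⌋ : ℝ)) else 0) := by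
  classical
  have hx0 : (0:ℝ) ≤ x := by linarith
  have hxh0 : (0:ℝ) ≤ x + h := by linarith
  have hJ0 : (0:ℝ) ≤ J := by linarith
  set s : Finset ℕ := (Finset.Iic ⌊J⌋₊).filter Nat.Prime with hs_def
  set M := ⌊x⌋₊ with hMdef
  set N := ⌊x + h⌋₊ with hNdef
  have hMN : M ≤ N := Nat.floor_mono (by linarith)
  have hM1 : 1 ≤ M := by
    rw [hMdef]
    exact Nat.one_le_floor_iff x |>.mpr hx
  set f : ℕ → ℝ := fun p => if p.Prime ∧ J < (p:ℝ) then
      ((⌊(x + h) / (p : ℝ) ^ 2⌋ : ℝ) - (⌊x / (p : ℝ) ^ 2⌋ : ℝ)) else 0 with hfdef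
  -- rewrite the set as a finset
  have hset : {n : ℕ | x < (n : ℝ) ∧ (n : ℝ) ≤ x + h ∧ ¬ Squarefree n}
      = (((Finset.Ioc M N).filter (fun n => ¬ Squarefree n) : Finset ℕ) : Set ℕ) := by
    ext n
    simp only [Set.mem_setOf_eq, Finset.coe_filter, Finset.mem_Ioc, Set.mem_setOf_eq]
    rw [hMdef, hNdef, Nat.floor_lt hx0, Nat.le_floor_iff hxh0]
    tauto
  rw [hset, Set.ncard_coe_finset]
  set T1 := (Finset.Ioc M N).filter (fun n => ∃ p ∈ s, p ^ 2 ∣ n) with hT1def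
  set P2 := (Finset.Ioc ⌊J⌋₊ N).filter Nat.Prime with hP2def
  have hsubset : (Finset.Ioc M N).filter (fun n => ¬ Squarefree n) ⊆
      T1 ∪ P2.biUnion (fun p => (Finset.Ioc M N).filter (fun n => p ^ 2 ∣ n)) := by
    intro n hn
    obtain ⟨hnI, hnsq⟩ := Finset.mem_filter.mp hn
    obtain ⟨hMn, hnN⟩ := Finset.mem_Ioc.mp hnI
    obtain ⟨p, hp, hpd⟩ : ∃ p, p.Prime ∧ p ^ 2 ∣ n := by
      rw [Nat.squarefree_iff_prime_squarefree] at hnsq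
      push_neg at hnsq
      obtain ⟨p, hp, hpd⟩ := hnsq
      exact ⟨p, hp, by rw [pow_two]; exact hpd⟩
    rcases le_or_gt p ⌊J⌋₊ with hple | hpgt
    · apply Finset.mem_union_left
      exact Finset.mem_filter.mpr ⟨hnI, ⟨p, Finset.mem_filter.mpr ⟨Finset.mem_Iic.mpr hple, hp⟩, hpd⟩⟩
    · apply Finset.mem_union_right
      apply Finset.mem_biUnion.mpr
      refine ⟨p, ?_, Finset.mem_filter.mpr ⟨hnI, hpd⟩⟩
      apply Finset.mem_filter.mpr
      refine ⟨Finset.mem_Ioc.mpr ⟨hpgt, ?_⟩, hp⟩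
      calc p ≤ p ^ 2 := Nat.le_self_pow two_ne_zero p
        _ ≤ n := Nat.le_of_dvd (by omega) hpd
        _ ≤ N := hnN
    -- nonnegativity of f
  have hf0 : ∀ p, 0 ≤ f p := by
    intro p
    rw [hfdef]
    simp only
    split
    · rename_i hcond
      have hp0 : (0:ℝ) < (p:ℝ) ^ 2 := by
        have := hcond.1.pos
        positivity
      have : (⌊x / (p:ℝ) ^ 2⌋ : ℤ) ≤ ⌊(x + h) / (p:ℝ) ^ 2⌋ :=
        Int.floor_le_floor (div_le_div_of_nonneg_right (by linarith) hp0.le)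
      have h2 : ((⌊x / (p:ℝ) ^ 2⌋ : ℤ) : ℝ) ≤ ((⌊(x + h) / (p:ℝ) ^ 2⌋ : ℤ) : ℝ) := by
        exact_mod_cast this
      linarith
    · exact le_refl 0
  have hfsupp : ∀ p, p ∉ Finset.range (N + 1) → f p = 0 := by
    intro p hp
    rw [Finset.mem_range, not_lt] at hp
    have hpR : x + h < (p:ℝ) := by
      have h1 : x + h < (N:ℝ) + 1 := by
        rw [hNdef]
        exact Nat.lt_floor_add_one (x + h)
      have h2 : ((N:ℕ):ℝ) + 1 ≤ (p:ℝ) := by exact_mod_cast hp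
      linarith
    have hp1 : (1:ℝ) ≤ (p:ℝ) := by
      have : (1:ℕ) ≤ p := by
        have : 1 ≤ N + 1 := by omega
        omega
      exact_mod_cast this
    have hpsq : x + h < (p:ℝ) ^ 2 := by nlinarith
    have hfl1 : ⌊(x + h) / (p:ℝ) ^ 2⌋ = 0 := by
      apply Int.floor_eq_zero_iff.mpr
      constructor
      · exact div_nonneg hxh0 (by positivity)
      · rw [div_lt_one (by positivity)]
        exact hpsq
    have hfl2 : ⌊x / (p:ℝ) ^ 2⌋ = 0 := by
      apply Int.floor_eq_zero_iff.mpr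
      constructor
      · exact div_nonneg hx0 (by positivity)
      · rw [div_lt_one (by positivity)]
        linarith
    rw [hfdef]
    simp only [hfl1, hfl2]
    split <;> simp
  have htsum : ∑' p : ℕ, f p = ∑ p ∈ Finset.range (N + 1), f p := tsum_eq_sum hfsupp
  have hP2sub : P2 ⊆ Finset.range (N + 1) := by
    intro p hp
    rw [hP2def] at hp
    have := (Finset.mem_Ioc.mp (Finset.mem_filter.mp hp).1).2
    rw [Finset.mem_range]
    omega
  have hterm : ∀ p ∈ P2, (((Finset.Ioc M N).filter (fun n => p ^ 2 ∣ n)).card : ℝ) ≤ f p := by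
    intro p hp
    obtain ⟨hpI, hpp⟩ := Finset.mem_filter.mp hp
    obtain ⟨hpJ, hpN⟩ := Finset.mem_Ioc.mp hpI
    have hcond : p.Prime ∧ J < (p:ℝ) := ⟨hpp, (Nat.floor_lt hJ0).mp hpJ⟩
    have hcast : ((p:ℝ)) ^ 2 = ((p ^ 2 : ℕ) : ℝ) := by push_cast; ring
    have hfl1 : (⌊(x + h) / (p:ℝ) ^ 2⌋ : ℤ) = ((N / p ^ 2 : ℕ) : ℤ) := by
      rw [hcast, ← Int.natCast_floor_eq_floor (div_nonneg hxh0 (by positivity)),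
        Nat.floor_div_natCast (x + h) (p ^ 2), ← hNdef]
    have hfl2 : (⌊x / (p:ℝ) ^ 2⌋ : ℤ) = ((M / p ^ 2 : ℕ) : ℤ) := by
      rw [hcast, ← Int.natCast_floor_eq_floor (div_nonneg hx0 (by positivity)),
        Nat.floor_div_natCast x (p ^ 2), ← hMdef]
    have hdivle : M / p ^ 2 ≤ N / p ^ 2 := Nat.div_le_div_right hMN
    rw [hfdef]
    simp only [if_pos hcond, hfl1, hfl2]
    rw [count_dvd_Ioc, Nat.cast_sub hdivle]
    norm_cast
  calc ((((Finset.Ioc M N).filter (fun n => ¬ Squarefree n)).card : ℕ) : ℝ)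
      ≤ (((T1 ∪ P2.biUnion (fun p => (Finset.Ioc M N).filter (fun n => p ^ 2 ∣ n))).card : ℕ) : ℝ) := by
        exact_mod_cast Nat.cast_le.mpr (Finset.card_le_card hsubset)
    _ ≤ ((T1.card : ℕ) : ℝ) + (((P2.biUnion (fun p => (Finset.Ioc M N).filter (fun n => p ^ 2 ∣ n))).card : ℕ) : ℝ) := by
        exact_mod_cast Nat.cast_le.mpr (Finset.card_union_le _ _)
    _ ≤ ((T1.card : ℕ) : ℝ) + ∑ p ∈ P2, (((Finset.Ioc M N).filter (fun n => p ^ 2 ∣ n)).card : ℝ) := by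
        have := Finset.card_biUnion_le (s := P2) (t := fun p => (Finset.Ioc M N).filter (fun n => p ^ 2 ∣ n))
        have h2 : (((P2.biUnion (fun p => (Finset.Ioc M N).filter (fun n => p ^ 2 ∣ n))).card : ℕ) : ℝ)
            ≤ ((∑ p ∈ P2, ((Finset.Ioc M N).filter (fun n => p ^ 2 ∣ n)).card : ℕ) : ℝ) :=
          Nat.cast_le.mpr this
        push_cast at h2
        linarith
    _ ≤ (h * (1 - ∏ p ∈ s, (1 - 1 / (p : ℝ) ^ 2)) + 2 ^ s.card) + ∑ p ∈ P2, f p := by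
        apply add_le_add
        · exact small_count x h hx hh s (fun p hp => (Finset.mem_filter.mp hp).2)
        · exact Finset.sum_le_sum hterm
    _ ≤ (h * (1 - ∏ p ∈ s, (1 - 1 / (p : ℝ) ^ 2)) + 2 ^ s.card) + ∑' p : ℕ, f p := by
        rw [htsum]
        apply add_le_add_right
        exact Finset.sum_le_sum_of_subset_of_nonneg hP2sub (fun p _ _ => hf0 p)
    _ = h * (1 - ∏ p ∈ s, (1 - 1 / (p : ℝ) ^ 2)) + 2 ^ s.card + ∑' p : ℕ, f p := by ring
end

section
/- Let x ≥ e^{116} and set h = 11·x^{1/5}·log x. Then |S(x^{2/5}, √(2x))| < 0.0009·h. -/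
set_option maxHeartbeats 4000000 in
/-- The bound (6.3): `|S(x^{2/5}, √(2x))| < 0.0009·h` for `h = 11·x^{1/5}·log x`
and `x ≥ e^{116}`. -/
theorem card_Sset_large_range (x : ℝ) (hx : Real.exp 116 ≤ x) :
    ((Sset x (11 * x ^ ((1 : ℝ) / 5) * Real.log x)
        (x ^ ((2 : ℝ) / 5)) (Real.sqrt (2 * x))).ncard : ℝ) <
      0.0009 * (11 * x ^ ((1 : ℝ) / 5) * Real.log x) := by
  have hx0 : (0:ℝ) < x := lt_of_lt_of_le (Real.exp_pos _) hx
  set h : ℝ := 11 * x ^ ((1:ℝ)/5) * Real.log x with hh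
  set t : ℝ := x ^ ((1:ℝ)/5) with htdef
  set s : ℝ := x ^ ((1:ℝ)/10) with hsdef
  have ht0 : 0 < t := Real.rpow_pos_of_pos hx0 _
  have hs0 : 0 < s := Real.rpow_pos_of_pos hx0 _
  have hlog : (116:ℝ) ≤ Real.log x := (Real.le_log_iff_exp_le hx0).mpr hx
  have hM0 : 0 < x ^ ((2:ℝ)/5) := Real.rpow_pos_of_pos hx0 _
  have hM2 : x ^ ((2:ℝ)/5) * x ^ ((2:ℝ)/5) = x ^ ((4:ℝ)/5) := by
    rw [← Real.rpow_add hx0]; norm_num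
  have ht2 : t * t = x ^ ((2:ℝ)/5) := by
    rw [htdef, ← Real.rpow_add hx0]; norm_num
  have hs2 : s * s = t := by
    rw [hsdef, htdef, ← Real.rpow_add hx0]; norm_num
  have hxt : x ^ ((4:ℝ)/5) * t = x := by
    rw [htdef, ← Real.rpow_add hx0]; norm_num
  have hlogs : Real.log x = 10 * Real.log s := by
    rw [hsdef, Real.log_rpow hx0]; ring
  -- numeric bounds on s and t
  have hsbig : (27.5 : ℝ) < s := by
    have h1 : Real.exp 116 ^ ((1:ℝ)/10) ≤ s := by
      rw [hsdef]; exact Real.rpow_le_rpow (Real.exp_pos _).le hx (by norm_num)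
    have h2 : Real.exp 116 ^ ((1:ℝ)/10) = Real.exp (11.6) := by
      rw [Real.rpow_def_of_pos (Real.exp_pos _), Real.log_exp]; norm_num
    have h3 : Real.exp (11.6:ℝ) = Real.exp 5.8 * Real.exp 5.8 := by
      rw [← Real.exp_add]; norm_num
    have h4 : (6.8 : ℝ) ≤ Real.exp 5.8 := by
      have := Real.add_one_le_exp (5.8 : ℝ); linarith
    nlinarith [Real.exp_pos (5.8:ℝ)]
  have htbig : (24.2 : ℝ) < t := by nlinarith
  have hlogs_le : Real.log s ≤ s := by
    have := Real.log_le_sub_one_of_pos hs0; linarith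
  have hh4M : h < 4 * x ^ ((2:ℝ)/5) := by
    rw [hh, hlogs, ← ht2, ← hs2]
    have e1 : 11 * (s*s) * (10 * Real.log s) ≤ 110 * ((s*s) * s) := by nlinarith [sq_nonneg s]
    have e2 : 110 * ((s*s) * s) < 4 * (s*s*(s*s)) := by nlinarith [mul_pos (mul_pos hs0 hs0) hs0]
    linarith
  have hh45 : h ≤ x ^ ((4:ℝ)/5) := by
    have h4 : (4:ℝ) ≤ t * t := by nlinarith
    have : 4 * x ^ ((2:ℝ)/5) ≤ x ^ ((4:ℝ)/5) := by
      rw [← hM2, ← ht2]; nlinarith [mul_pos ht0 ht0]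
    linarith
  set f : ℤ → ℤ := fun u => ⌊x / (u:ℝ)^2⌋ + 1 with hfdef
  have key : ∀ u ∈ Sset x h (x ^ ((2:ℝ)/5)) (Real.sqrt (2*x)),
      (0:ℤ) < f u ∧ x < (f u : ℝ) * (u:ℝ)^2 ∧
      (f u : ℝ) * (u:ℝ)^2 ≤ x + h ∧ x ^ ((4:ℝ)/5) < (u:ℝ)^2 := by
    intro u hu
    obtain ⟨hodd, hMu, hNu, hfr, _⟩ := hu
    have hu0 : (0:ℝ) < (u:ℝ) := lt_trans hM0 hMu
    have hu2 : (0:ℝ) < (u:ℝ)^2 := by positivity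
    have h45 : x ^ ((4:ℝ)/5) < (u:ℝ)^2 := by
      rw [← hM2]; nlinarith
    have hflt : x / (u:ℝ)^2 < (f u : ℝ) := by
      have := Int.lt_floor_add_one (x / (u:ℝ)^2)
      simp only [hfdef]; push_cast; linarith
    have hxlt : x < (f u : ℝ) * (u:ℝ)^2 := by
      have := (div_lt_iff₀ hu2).mp hflt; linarith
    have hfpos : (0:ℤ) < f u := by
      have : (0:ℝ) < (f u : ℝ) := by
        by_contra hc; push_neg at hc; nlinarith
      exact_mod_cast this
    refine ⟨hfpos, hxlt, ?_, h45⟩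
    have hfl := Int.floor_add_fract (x / (u:ℝ)^2)
    have h1 : (f u : ℝ) ≤ x / (u:ℝ)^2 + h / (u:ℝ)^2 := by
      simp only [hfdef]; push_cast; linarith
    have h2 := mul_le_mul_of_nonneg_right h1 hu2.le
    have h3 : (x / (u:ℝ)^2 + h / (u:ℝ)^2) * (u:ℝ)^2 = x + h := by
      field_simp
    linarith
  have hinj : Set.InjOn f (Sset x h (x ^ ((2:ℝ)/5)) (Real.sqrt (2*x))) := by
    intro u1 hu1 u2 hu2 heq
    by_contra hne
    obtain ⟨hp1, hA1, hB1, hC1⟩ := key u1 hu1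
    obtain ⟨hp2, hA2, hB2, hC2⟩ := key u2 hu2
    obtain ⟨hodd1, hM1, _, _, _⟩ := hu1
    obtain ⟨hodd2, hM2', _, _, _⟩ := hu2
    have hm1 : (1:ℝ) ≤ (f u1 : ℝ) := by exact_mod_cast hp1
    have hdiff : (2:ℝ) ≤ |(u1:ℝ) - (u2:ℝ)| := by
      have hev : Even (u1 - u2) := Odd.sub_odd hodd1 hodd2
      obtain ⟨k, hk⟩ := hev
      have hk0 : k ≠ 0 := by rintro rfl; apply hne; omega
      have h2k : (2:ℤ) ≤ |u1 - u2| := by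
        rcases abs_cases (u1 - u2) with ⟨he, _⟩ | ⟨he, _⟩ <;> rw [he] <;> omega
      exact_mod_cast h2k
    have hsum : 2 * x ^ ((2:ℝ)/5) < (u1:ℝ) + (u2:ℝ) := by linarith
    have habs : 4 * x ^ ((2:ℝ)/5) < |(u1:ℝ)^2 - (u2:ℝ)^2| := by
      have he : (u1:ℝ)^2 - (u2:ℝ)^2 = ((u1:ℝ) - (u2:ℝ)) * ((u1:ℝ) + (u2:ℝ)) := by ring
      rw [he, abs_mul, abs_of_pos (by linarith : (0:ℝ) < (u1:ℝ) + (u2:ℝ))]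
      nlinarith
    have hA2' : x < (f u1 : ℝ) * (u2:ℝ)^2 := by rw [heq]; exact hA2
    have hB2' : (f u1 : ℝ) * (u2:ℝ)^2 ≤ x + h := by rw [heq]; exact hB2
    have hd1 : (f u1 : ℝ) * ((u1:ℝ)^2 - (u2:ℝ)^2) < h := by
      have e : (f u1 : ℝ) * ((u1:ℝ)^2 - (u2:ℝ)^2)
          = (f u1 : ℝ) * (u1:ℝ)^2 - (f u1 : ℝ) * (u2:ℝ)^2 := by ring
      rw [e]; linarith
    have hd2 : (f u1 : ℝ) * ((u2:ℝ)^2 - (u1:ℝ)^2) < h := by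
      have e : (f u1 : ℝ) * ((u2:ℝ)^2 - (u1:ℝ)^2)
          = (f u1 : ℝ) * (u2:ℝ)^2 - (f u1 : ℝ) * (u1:ℝ)^2 := by ring
      rw [e]; linarith
    rcases le_or_gt 0 ((u1:ℝ)^2 - (u2:ℝ)^2) with hD | hD
    · have habsD : |(u1:ℝ)^2 - (u2:ℝ)^2| = (u1:ℝ)^2 - (u2:ℝ)^2 := abs_of_nonneg hD
      have hmd : (u1:ℝ)^2 - (u2:ℝ)^2 ≤ (f u1 : ℝ) * ((u1:ℝ)^2 - (u2:ℝ)^2) := by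
        have e2 : (f u1 : ℝ) * ((u1:ℝ)^2 - (u2:ℝ)^2) - ((u1:ℝ)^2 - (u2:ℝ)^2)
            = ((f u1 : ℝ) - 1) * ((u1:ℝ)^2 - (u2:ℝ)^2) := by ring
        linarith [mul_nonneg (by linarith : (0:ℝ) ≤ (f u1 : ℝ) - 1) hD, e2]
      rw [habsD] at habs
      linarith
    · have habsD : |(u1:ℝ)^2 - (u2:ℝ)^2| = (u2:ℝ)^2 - (u1:ℝ)^2 := by
        rw [abs_of_neg hD]; ring
      have hD' : (0:ℝ) ≤ (u2:ℝ)^2 - (u1:ℝ)^2 := by linarith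
      have hmd : (u2:ℝ)^2 - (u1:ℝ)^2 ≤ (f u1 : ℝ) * ((u2:ℝ)^2 - (u1:ℝ)^2) := by
        have e2 : (f u1 : ℝ) * ((u2:ℝ)^2 - (u1:ℝ)^2) - ((u2:ℝ)^2 - (u1:ℝ)^2)
            = ((f u1 : ℝ) - 1) * ((u2:ℝ)^2 - (u1:ℝ)^2) := by ring
        linarith [mul_nonneg (by linarith : (0:ℝ) ≤ (f u1 : ℝ) - 1) hD', e2]
      rw [habsD] at habs
      linarith
  set K : ℤ := ⌊t + 1⌋ with hKdef
  have himg : f '' (Sset x h (x ^ ((2:ℝ)/5)) (Real.sqrt (2*x))) ⊆ ↑(Finset.Icc (1:ℤ) K) := by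
    rintro m ⟨u, hu, rfl⟩
    obtain ⟨hp, hA, hB, hC⟩ := key u hu
    simp only [Finset.coe_Icc, Set.mem_Icc]
    refine ⟨hp, ?_⟩
    rw [hKdef, Int.le_floor]
    have h45pos : (0:ℝ) < x ^ ((4:ℝ)/5) := Real.rpow_pos_of_pos hx0 _
    have hone : (1:ℝ) ≤ (f u : ℝ) := by exact_mod_cast hp
    have hle : (f u : ℝ) * x ^ ((4:ℝ)/5) ≤ (f u : ℝ) * (u:ℝ)^2 := by nlinarith
    nlinarith
  have hcard : ((Sset x h (x ^ ((2:ℝ)/5)) (Real.sqrt (2*x))).ncard : ℝ) ≤ (K : ℝ) := by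
    have h2 := Set.ncard_le_ncard himg (Finset.Icc (1:ℤ) K).finite_toSet
    rw [Set.ncard_coe_finset, Set.ncard_image_of_injOn hinj] at h2
    have h3 : (Finset.Icc (1:ℤ) K).card = K.toNat := by rw [Int.card_Icc]; congr 1; omega
    have hK0 : 0 ≤ K := Int.floor_nonneg.mpr (by linarith)
    rw [h3] at h2
    calc ((Sset x h (x ^ ((2:ℝ)/5)) (Real.sqrt (2*x))).ncard : ℝ) ≤ (K.toNat : ℝ) := by
          exact_mod_cast h2
      _ = (K : ℝ) := by exact_mod_cast Int.toNat_of_nonneg hK0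
  have hKt : (K : ℝ) ≤ t + 1 := Int.floor_le _
  have hfinal : t + 1 < 0.0009 * h := by
    rw [hh]
    nlinarith [mul_nonneg ht0.le (by linarith : (0:ℝ) ≤ Real.log x - 116)]
  calc ((Sset x h (x ^ ((2:ℝ)/5)) (Real.sqrt (2*x))).ncard : ℝ) ≤ (K:ℝ) := hcard
    _ ≤ t + 1 := hKt
    _ < 0.0009 * h := hfinal
end
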